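/- arXiv:1910.00826 — 8 statements merged into one kernel-verified Lean document; each statement's English description precedes it below -/
import Mathlib

section
/- A word w over a finite alphabet contains at most |w|+1 distinct palindromic factors (including the empty word). -/
def Rich {A : Type*} (w : List A) : Prop :=
  {p : List A | p.reverse = p ∧ p <:+: w}.ncard = w.length + 1

lemma finite_infix_set {A : Type*} (w : List A) :
    {p : List A | p <:+: w}.Finite := by
  apply Set.Finite.subset (List.finite_toSet (w.tails.flatMap List.inits))
  intro p hp
  simp only [Set.mem_setOf_eq] at hp
  obtain ⟨t, hpt, htw⟩ := List.infix_iff_prefix_suffix.mp hp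
  simp only [Set.mem_setOf_eq, List.mem_flatMap, List.mem_tails, List.mem_inits]
  exact ⟨t, htw, hpt⟩

lemma finite_pal_set {A : Type*} (w : List A) :
    {p : List A | p.reverse = p ∧ p <:+: w}.Finite :=
  (finite_infix_set w).subset (fun p hp => hp.2)

/-- A suffix of `w` of length ≤ that of another suffix `q` is a suffix of `q`. -/
lemma suffix_of_suffix_length_le {A : Type*} {p q w : List A}
    (hp : p <:+ w) (hq : q <:+ w) (h : p.length ≤ q.length) : p <:+ q := by
  rw [← List.reverse_prefix] at hp hq ⊢
  exact List.prefix_of_prefix_length_le hp hq (by simpa using h)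

theorem stmt0 {A : Type*} [Fintype A] (w : List A) :
    {p : List A | p.reverse = p ∧ p <:+: w}.ncard ≤ w.length + 1 := by
  induction w using List.reverseRecOn with
  | nil =>
      have : {p : List A | p.reverse = p ∧ p <:+: ([] : List A)} = {([] : List A)} := by
        ext p
        simp only [Set.mem_setOf_eq, List.infix_nil, Set.mem_singleton_iff]
        constructor
        · rintro ⟨-, h⟩; exact h
        · rintro rfl; exact ⟨rfl, rfl⟩
      rw [this, Set.ncard_singleton]
      simp
  | append_singleton u a ih =>
      -- the set of palindromic suffixes of u ++ [a] is finite and nonempty ([a] is one)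
      set w := u ++ [a] with hw
      have hSfin : {p : List A | p.reverse = p ∧ p <:+ w}.Finite :=
        (finite_pal_set w).subset (fun p hp => ⟨hp.1, hp.2.isInfix⟩)
      have hane : ([a] : List A) ∈ hSfin.toFinset := by
        simp only [Set.Finite.mem_toFinset, Set.mem_setOf_eq]
        exact ⟨rfl, ⟨u, rfl⟩⟩
      obtain ⟨q, hqmem, hqmax⟩ :=
        Finset.exists_max_image hSfin.toFinset List.length ⟨[a], hane⟩
      simp only [Set.Finite.mem_toFinset, Set.mem_setOf_eq] at hqmem
      obtain ⟨hqpal, hqsuf⟩ := hqmem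
      -- key inclusion
      have hsub : {p : List A | p.reverse = p ∧ p <:+: w} ⊆
          {p : List A | p.reverse = p ∧ p <:+: u} ∪ {q} := by
        intro p hp
        obtain ⟨hppal, hpinf⟩ := hp
        by_cases hpu : p <:+: u
        · exact Or.inl ⟨hppal, hpu⟩
        right
        -- p must be a suffix of w
        obtain ⟨s, t, hst⟩ := hpinf
        have hpsuf : p <:+ w := by
          rcases List.eq_nil_or_concat t with rfl | ⟨t', b, rfl⟩
          · exact ⟨s, by simpa using hst⟩
          · exfalso
            apply hpu
            have : (s ++ p ++ t') ++ [b] = u ++ [a] := by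
              simpa [List.append_assoc] using hst
            have hu : s ++ p ++ t' = u := by
              have := congrArg List.dropLast this
              simpa [List.dropLast_concat] using this
            exact ⟨s, t', by simpa [List.append_assoc] using hu⟩
        -- p is a palindromic suffix, so p.length ≤ q.length
        have hple : p.length ≤ q.length := by
          apply hqmax
          simp only [Set.Finite.mem_toFinset, Set.mem_setOf_eq]
          exact ⟨hppal, hpsuf⟩
        -- p is a suffix of q, hence (palindromes) a prefix of q
        have hpq : p <:+ q := suffix_of_suffix_length_le hpsuf hqsuf hple
        by_cases hlen : p.length = q.length
        · -- same length suffix ⇒ equal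
          have : p = q := hpq.eq_of_length hlen
          simpa using this
        -- p is a strict prefix of q, so p is an infix of u : contradiction with hpu
        exfalso
        apply hpu
        have hppre : p <+: q := by
          rw [← List.reverse_suffix, hppal, hqpal]; exact hpq
        obtain ⟨r, hr⟩ := hppre
        obtain ⟨s', hs'⟩ := hqsuf
        have hrne : r ≠ [] := by
          rintro rfl
          exact hlen (by simp [← hr])
        rcases List.eq_nil_or_concat r with rfl | ⟨r', b, rfl⟩
        · exact absurd rfl hrne
        rw [List.concat_eq_append] at hr
        have : (s' ++ p ++ r') ++ [b] = u ++ [a] := by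
          have : s' ++ (p ++ (r' ++ [b])) = u ++ [a] := by
            rw [hr, hs']
          simpa [List.append_assoc] using this
        have hu : s' ++ p ++ r' = u := by
          have := congrArg List.dropLast this
          simpa [List.dropLast_concat] using this
        exact ⟨s', r', by simpa [List.append_assoc] using hu⟩
      calc {p : List A | p.reverse = p ∧ p <:+: w}.ncard
          ≤ ({p : List A | p.reverse = p ∧ p <:+: u} ∪ {q}).ncard :=
            Set.ncard_le_ncard hsub (((finite_pal_set u).union (Set.finite_singleton q)))
        _ ≤ {p : List A | p.reverse = p ∧ p <:+: u}.ncard + ({q} : Set (List A)).ncard :=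
            Set.ncard_union_le _ _
        _ = {p : List A | p.reverse = p ∧ p <:+: u}.ncard + 1 := by rw [Set.ncard_singleton]
        _ ≤ (u.length + 1) + 1 := by omega
        _ = w.length + 1 := by simp [hw]
end

section
/- If w is rich and p is a factor of w, then both p and the reversal of p are rich. -/
namespace RichAux

variable {A : Type*}

def S (w : List A) : Set (List A) := {p : List A | p.reverse = p ∧ p <:+: w}

lemma finS (w : List A) : (S w).Finite := by
  classical
  apply Set.Finite.subset (w.sublists.toFinset.finite_toSet)
  intro p hp
  simp only [List.coe_toFinset, Set.mem_setOf_eq, List.mem_sublists]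
  exact hp.2.sublist

lemma rich_iff (w : List A) : Rich w ↔ (S w).ncard = w.length + 1 := Iff.rfl

/-- The new palindromic factors after appending a letter form a subsingleton. -/
lemma delta_subsingleton (w : List A) (a : A) :
    (S (w ++ [a]) \ S w).Subsingleton := by
  have key : ∀ u ∈ S (w ++ [a]) \ S w, u <:+ w ++ [a] := by
    rintro u ⟨⟨hpal, hinf⟩, hnot⟩
    rcases List.infix_concat_iff.1 hinf with h | h
    · exact h
    · exact absurd ⟨hpal, h⟩ hnot
  -- if u, v are palindromic suffixes, not factors of w, then u = v
  have main : ∀ u ∈ S (w ++ [a]) \ S w, ∀ v ∈ S (w ++ [a]) \ S w,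
      u.length ≤ v.length → u = v := by
    rintro u hu v hv hlen
    have hupal := hu.1.1
    have hunot := hu.2
    have hvpal := hv.1.1
    have husuf := key u hu
    have hvsuf := key v hv
    have huv : u <:+ v := List.suffix_of_suffix_length_le husuf hvsuf hlen
    -- u is a prefix of v since both palindromes
    have hupre : u <+: v := by
      have := List.reverse_prefix.2 huv
      rwa [hupal, hvpal] at this
    rcases Nat.lt_or_ge u.length v.length with hlt | hge
    · exfalso
      obtain ⟨r, hr⟩ := hupre
      obtain ⟨s, hs⟩ := hvsuf
      have hrne : r ≠ [] := by
        intro h; subst h; simp at hr; subst hr; omega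
      obtain ⟨r', b, rfl⟩ := r.eq_nil_or_concat.resolve_left hrne
      have : (s ++ (u ++ r')) ++ [b] = w ++ [a] := by
        rw [← hs, ← hr]; simp
      have hb : b = a ∧ s ++ (u ++ r') = w := by
        have h1 := List.append_inj' this rfl
        exact ⟨by simpa using h1.2, h1.1⟩
      apply hunot
      refine ⟨hupal, ?_⟩
      rw [← hb.2]
      exact ⟨s, r', by simp⟩
    · exact hupre.eq_of_length (le_antisymm hlen hge)
  intro u hu v hv
  rcases Nat.le_total u.length v.length with h | h
  · exact main u hu v hv h
  · exact (main v hv u hu h).symm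

lemma S_mono {w w' : List A} (h : w <:+: w') : S w ⊆ S w' := by
  rintro p ⟨hpal, hinf⟩
  exact ⟨hpal, hinf.trans h⟩

lemma card_bound (w : List A) : (S w).ncard ≤ w.length + 1 := by
  induction w using List.reverseRecOn with
  | nil =>
    have : S ([] : List A) = {[]} := by
      ext p
      simp [S, List.infix_nil]
      rintro rfl; rfl
    simp [this]
  | append_singleton w a ih =>
    have hsub : S (w ++ [a]) ⊆ S w ∪ (S (w ++ [a]) \ S w) := by
      intro p hp
      by_cases h : p ∈ S w
      · exact Or.inl h
      · exact Or.inr ⟨hp, h⟩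
    calc (S (w ++ [a])).ncard ≤ (S w ∪ (S (w ++ [a]) \ S w)).ncard :=
          Set.ncard_le_ncard hsub ((finS w).union ((finS _).diff))
      _ ≤ (S w).ncard + (S (w ++ [a]) \ S w).ncard :=
          Set.ncard_union_le _ _
      _ ≤ (w.length + 1) + 1 := by
          gcongr
          exact (Set.ncard_le_one ((finS _).diff)).2 (fun a ha b hb => delta_subsingleton w _ ha hb)
      _ = (w ++ [a]).length + 1 := by simp

lemma rich_drop_last (w : List A) (a : A) (h : Rich (w ++ [a])) : Rich w := by
  rw [rich_iff] at h ⊢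
  have h1 : (S (w ++ [a])).ncard ≤ (S w).ncard + 1 := by
    have hsub : S (w ++ [a]) ⊆ S w ∪ (S (w ++ [a]) \ S w) := by
      intro p hp
      by_cases hc : p ∈ S w
      · exact Or.inl hc
      · exact Or.inr ⟨hp, hc⟩
    calc (S (w ++ [a])).ncard ≤ (S w ∪ (S (w ++ [a]) \ S w)).ncard :=
          Set.ncard_le_ncard hsub ((finS w).union ((finS _).diff))
      _ ≤ (S w).ncard + (S (w ++ [a]) \ S w).ncard := Set.ncard_union_le _ _
      _ ≤ (S w).ncard + 1 := by
          gcongr; exact (Set.ncard_le_one ((finS _).diff)).2 (fun a ha b hb => delta_subsingleton w _ ha hb)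
  have h2 := card_bound w
  simp only [List.length_append, List.length_singleton] at h
  omega

lemma rich_prefix {w u : List A} (hw : Rich w) (hu : u <+: w) : Rich u := by
  induction w using List.reverseRecOn with
  | nil => rwa [List.prefix_nil.1 hu]
  | append_singleton w a ih =>
    rcases List.prefix_concat_iff.1 hu with rfl | h
    · exact hw
    · exact ih (rich_drop_last w a hw) h

lemma S_reverse (w : List A) : S w.reverse = S w := by
  ext p
  constructor
  · rintro ⟨hpal, hinf⟩
    refine ⟨hpal, ?_⟩
    have : p.reverse <:+: w.reverse.reverse := List.reverse_infix.2 hinf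
    rwa [hpal, List.reverse_reverse] at this
  · rintro ⟨hpal, hinf⟩
    refine ⟨hpal, ?_⟩
    have : p.reverse <:+: w.reverse := List.reverse_infix.2 hinf
    rwa [hpal] at this

lemma rich_reverse {w : List A} (hw : Rich w) : Rich w.reverse := by
  rw [rich_iff, S_reverse, List.length_reverse]
  exact hw

lemma rich_suffix {w u : List A} (hw : Rich w) (hu : u <:+ w) : Rich u := by
  have h1 : u.reverse <+: w.reverse := List.reverse_prefix.2 hu
  have h2 := rich_prefix (rich_reverse hw) h1
  have := rich_reverse h2
  rwa [List.reverse_reverse] at this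

end RichAux

theorem stmt2 {A : Type*} (w p : List A) (hw : Rich w) (hp : p <:+: w) :
    Rich p ∧ Rich p.reverse := by
  obtain ⟨t, hpt, htw⟩ := List.infix_iff_prefix_suffix.1 hp
  have hp' : Rich p := RichAux.rich_prefix (RichAux.rich_suffix hw htw) hpt
  exact ⟨hp', RichAux.rich_reverse hp'⟩
end

section
/- Let v, v̄, u be nonempty rich words such that v·v̄·u is a unique rich extension of v·v̄ and v̄ = lpps(v·v̄). If |u| ≤ |v| then the reversal of u is a suffix of v; if |u| ≥ |v| then the reversal of v is a prefix of u. -/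
/-- `v` can be extended (to a rich word) in at least two ways. -/
def TwoWays {A : Type*} (v : List A) : Prop :=
  ∃ x y : A, x ≠ y ∧ Rich (v ++ [x]) ∧ Rich (v ++ [y])
/-- `u` is a unique rich extension of `w`. -/
def UniqueRichExt {A : Type*} (w u : List A) : Prop :=
  Rich u ∧ w <+: u ∧ ∀ v : List A, w <+: v → v <+: u → v ≠ u → ¬ TwoWays v
/-- `p` is the longest proper palindromic suffix of `w`. -/
def IsLPPS {A : Type*} (w p : List A) : Prop :=
  p.reverse = p ∧ p <:+ w ∧ p ≠ w ∧
    ∀ q : List A, q.reverse = q → q <:+ w → q ≠ w → q.length ≤ p.length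

/-- The set of palindromic factors. -/
def rwPF (w : List A) : Set (List A) := {p | p.reverse = p ∧ p <:+: w}

lemma rw_rich_iff (w : List A) : Rich w ↔ (rwPF w).ncard = w.length + 1 := Iff.rfl

lemma rw_concat (l : List A) : l = [] ∨ ∃ l' a, l = l' ++ [a] := by
  rcases List.eq_nil_or_concat l with h | ⟨l', a, h⟩
  · exact Or.inl h
  · exact Or.inr ⟨l', a, by simpa using h⟩

lemma rwPF_finite (w : List A) : (rwPF w).Finite := by
  apply Set.Finite.subset (List.finite_toSet w.sublists)
  intro q hq
  simpa using hq.2.sublist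

lemma rwPF_mono {w₁ w₂ : List A} (h : w₁ <:+: w₂) : rwPF w₁ ⊆ rwPF w₂ :=
  fun _ hq => ⟨hq.1, hq.2.trans h⟩

lemma rw_infix_concat {r w : List A} {c : A} (h : r <:+: w ++ [c]) :
    r <:+: w ∨ r <:+ w ++ [c] := by
  obtain ⟨x, y, hxy⟩ := h
  rcases rw_concat y with rfl | ⟨y', c₀, rfl⟩
  · right; exact ⟨x, by simpa using hxy⟩
  · left
    have h2 : (x ++ r ++ y') ++ [c₀] = w ++ [c] := by
      simpa [List.append_assoc] using hxy
    obtain ⟨h1, _⟩ := List.append_inj' h2 rfl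
    exact ⟨x, y', h1⟩

lemma rw_pal_suffix_prefix {r p : List A} (hr : r.reverse = r) (hp : p.reverse = p)
    (h : r <:+ p) : r <+: p := by
  have h2 := List.reverse_prefix.2 h
  rwa [hr, hp] at h2

lemma rw_suffix_of_suffix_length_le {r p w : List A} (h1 : r <:+ w) (h2 : p <:+ w)
    (h : r.length ≤ p.length) : r <:+ p := by
  rcases List.suffix_or_suffix_of_suffix h1 h2 with h' | h'
  · exact h'
  · have := h'.eq_of_length_le h
    subst this; exact List.suffix_rfl

lemma rw_new_pal_sub (w : List A) (c : A) :
    (rwPF (w ++ [c]) \ rwPF w).Subsingleton := by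
  have key : ∀ q₁ q₂ : List A, q₁ ∈ rwPF (w ++ [c]) \ rwPF w → q₂ ∈ rwPF (w ++ [c]) \ rwPF w →
      q₁.length ≤ q₂.length → q₁ = q₂ := by
    intro q₁ q₂ h₁ h₂ hlen
    have hs : ∀ q, q ∈ rwPF (w ++ [c]) \ rwPF w → q <:+ w ++ [c] := by
      intro q hq
      rcases rw_infix_concat hq.1.2 with h | h
      · exact absurd ⟨hq.1.1, h⟩ hq.2
      · exact h
    have h12 : q₁ <:+ q₂ := rw_suffix_of_suffix_length_le (hs q₁ h₁) (hs q₂ h₂) hlen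
    have hpre : q₁ <+: q₂ := rw_pal_suffix_prefix h₁.1.1 h₂.1.1 h12
    obtain ⟨r, hr⟩ := hpre
    rcases rw_concat r with rfl | ⟨r', c₀, rfl⟩
    · simpa using hr
    · exfalso
      obtain ⟨x, hx⟩ := hs q₂ h₂
      have h2 : (x ++ q₁ ++ r') ++ [c₀] = w ++ [c] := by
        rw [← hx, ← hr]; simp [List.append_assoc]
      obtain ⟨h1, _⟩ := List.append_inj' h2 rfl
      exact h₁.2 ⟨h₁.1.1, x, r', h1⟩
  intro q₁ h₁ q₂ h₂
  rcases le_total q₁.length q₂.length with h | h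
  · exact key q₁ q₂ h₁ h₂ h
  · exact (key q₂ q₁ h₂ h₁ h).symm

lemma rw_ncard_sub_le {s : Set (List A)} (h : s.Subsingleton) : s.ncard ≤ 1 := by
  rcases h.eq_empty_or_singleton with rfl | ⟨a, rfl⟩ <;> simp

lemma rwPF_concat_ncard (w : List A) (c : A) :
    (rwPF (w ++ [c])).ncard ≤ (rwPF w).ncard + 1 := by
  have hsub : rwPF (w ++ [c]) ⊆ rwPF w ∪ (rwPF (w ++ [c]) \ rwPF w) := by
    intro q hq
    by_cases h : q ∈ rwPF w
    · exact Or.inl h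
    · exact Or.inr ⟨hq, h⟩
  calc (rwPF (w ++ [c])).ncard
      ≤ (rwPF w ∪ (rwPF (w ++ [c]) \ rwPF w)).ncard :=
        Set.ncard_le_ncard hsub ((rwPF_finite w).union ((rwPF_finite (w ++ [c])).subset Set.diff_subset))
    _ ≤ (rwPF w).ncard + (rwPF (w ++ [c]) \ rwPF w).ncard := Set.ncard_union_le _ _
    _ ≤ (rwPF w).ncard + 1 := by
        have := rw_ncard_sub_le (rw_new_pal_sub w c); omega

lemma rwPF_card_le (w : List A) : (rwPF w).ncard ≤ w.length + 1 := by
  induction w using List.reverseRecOn with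
  | nil =>
    have h : rwPF ([] : List A) = {([] : List A)} := by
      ext q
      simp only [rwPF, Set.mem_setOf_eq, Set.mem_singleton_iff]
      constructor
      · rintro ⟨-, h2⟩; exact List.sublist_nil.1 h2.sublist
      · rintro rfl; exact ⟨rfl, List.infix_rfl⟩
    simp [h]
  | append_singleton w c ih =>
    have := rwPF_concat_ncard w c
    simp only [List.length_append, List.length_singleton]
    omega

lemma rw_rich_concat {w : List A} {c : A} (h : Rich (w ++ [c])) : Rich w := by
  rw [rw_rich_iff] at h ⊢
  have h1 := rwPF_concat_ncard w c
  have h2 := rwPF_card_le w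
  simp only [List.length_append, List.length_singleton] at h
  omega

lemma rw_rich_prefix : ∀ {t w : List A}, Rich (w ++ t) → Rich w := by
  intro t
  induction t using List.reverseRecOn with
  | nil => intro w h; simpa using h
  | append_singleton t c ih =>
    intro w h
    rw [← List.append_assoc] at h
    exact ih (rw_rich_concat h)

lemma rw_rich_of_prefix {w u : List A} (h : w <+: u) (hu : Rich u) : Rich w := by
  obtain ⟨t, rfl⟩ := h
  exact rw_rich_prefix hu

lemma rw_rich_concat_of_new {w : List A} {c : A} (h : Rich w) {q : List A}
    (hqpal : q.reverse = q) (hqsuf : q <:+ w ++ [c]) (hnew : ¬ q <:+: w) :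
    Rich (w ++ [c]) := by
  have hins : insert q (rwPF w) ⊆ rwPF (w ++ [c]) := by
    intro r hr
    rcases hr with rfl | hr
    · exact ⟨hqpal, hqsuf.isInfix⟩
    · exact rwPF_mono (List.prefix_append w [c]).isInfix hr
  have hq : q ∉ rwPF w := fun hq => hnew hq.2
  have h1 : (insert q (rwPF w)).ncard = (rwPF w).ncard + 1 :=
    Set.ncard_insert_of_notMem hq (rwPF_finite w)
  have h2 := Set.ncard_le_ncard hins (rwPF_finite _)
  have h3 := rwPF_card_le (w ++ [c])
  rw [rw_rich_iff] at h ⊢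
  simp only [List.length_append, List.length_singleton] at *
  omega

/-- Lemma U : a maximal palindromic suffix of a rich word is unioccurrent. -/
lemma rw_lps_not_infix {w' : List A} {c : A} {p : List A}
    (h : Rich (w' ++ [c])) (hp : p.reverse = p) (hps : p <:+ w' ++ [c])
    (hmax : ∀ q : List A, q.reverse = q → q <:+ w' ++ [c] → q.length ≤ p.length) :
    ¬ p <:+: w' := by
  intro hinf
  have hsub : rwPF (w' ++ [c]) ⊆ rwPF w' := by
    intro r hr
    rcases rw_infix_concat hr.2 with h' | h'
    · exact ⟨hr.1, h'⟩
    · have hlen := hmax r hr.1 h'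
      have hrp : r <:+ p := rw_suffix_of_suffix_length_le h' hps hlen
      have hpre : r <+: p := rw_pal_suffix_prefix hr.1 hp hrp
      exact ⟨hr.1, hpre.isInfix.trans hinf⟩
  have h1 := Set.ncard_le_ncard hsub (rwPF_finite w')
  have h2 := rwPF_card_le w'
  rw [rw_rich_iff] at h
  simp only [List.length_append, List.length_singleton] at h
  omega

/-- Lemma B : in a rich palindrome, the lpps occurs only as prefix and suffix. -/
lemma rw_lpps_occurrence {w p : List A} (hrich : Rich w) (hwpal : w.reverse = w)
    (hlpps : IsLPPS w p) :
    ∀ x y : List A, w = x ++ p ++ y → x ≠ [] → y ≠ [] → False := by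
  obtain ⟨hppal, hpsuf, hpne, hpmax⟩ := hlpps
  have hppre : p <+: w := by
    have h2 := List.reverse_prefix.2 hpsuf
    rwa [hppal, hwpal] at h2
  suffices H : ∀ n : ℕ, ∀ x y : List A, x.length ≤ n → w = x ++ p ++ y → x ≠ [] → y ≠ [] → False by
    exact fun x y h hx hy => H x.length x y le_rfl h hx hy
  intro n
  induction n with
  | zero =>
    intro x y hx _ hxne _
    exact hxne (List.length_eq_zero_iff.1 (Nat.le_zero.1 hx))
  | succ n ih =>
    intro x y hxn hw hxne hyne
    have hupre : (x ++ p) <+: w := ⟨y, hw.symm⟩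
    have hurich : Rich (x ++ p) := rw_rich_of_prefix hupre hrich
    set u := x ++ p with hu
    have hfin : {q : List A | q.reverse = q ∧ q <:+ u}.Finite :=
      (rwPF_finite u).subset (fun q hq => ⟨hq.1, hq.2.isInfix⟩)
    have hpmem : p ∈ {q : List A | q.reverse = q ∧ q <:+ u} := ⟨hppal, List.suffix_append x p⟩
    obtain ⟨L, hL, hLmax'⟩ := Set.Finite.exists_maximalFor List.length _ hfin ⟨p, hpmem⟩
    have hLmax : ∀ q : List A, q.reverse = q → q <:+ u → q.length ≤ L.length := by
      intro q hq1 hq2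
      by_contra hlt
      push_neg at hlt
      have := hLmax' (j := q) ⟨hq1, hq2⟩ (le_of_lt hlt)
      omega
    have hLpal : L.reverse = L := hL.1
    have hLsuf : L <:+ u := hL.2
    have hpL : p.length ≤ L.length := hLmax p hppal (List.suffix_append x p)
    have hulen : u.length = x.length + p.length := by simp [hu]
    have hxpos : 0 < x.length := List.length_pos_iff.2 hxne
    have hune : u ≠ [] := by
      intro h; rw [hu] at h
      exact hxne (List.append_eq_nil_iff.1 h).1
    obtain ⟨u', c₀, hu'⟩ := (rw_concat u).resolve_left hune
    have hLni : ¬ L <:+: u' := by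
      apply rw_lps_not_infix (p := L) (by rwa [← hu']) hLpal (by rwa [← hu'])
      intro q hq1 hq2
      exact hLmax q hq1 (by rwa [hu'])
    rcases eq_or_lt_of_le (List.IsSuffix.length_le hLsuf) with hLeq | hLlt
    · -- L = u : u is a palindrome, proper palindromic suffix of w longer than p
      have hLu : L = u := hLsuf.eq_of_length_le (le_of_eq hLeq.symm)
      have hupal : u.reverse = u := by rw [← hLu]; exact hLpal
      have husuf : u <:+ w := by
        have h2 := List.reverse_suffix.2 hupre
        rwa [hupal, hwpal] at h2
      have huw : u ≠ w := by
        intro h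
        rw [h] at hw
        have h2 := congrArg List.length hw
        simp only [List.length_append] at h2
        exact hyne (List.length_eq_zero_iff.1 (by omega))
      have := hpmax u hupal husuf huw
      omega
    · -- L a proper suffix of u
      obtain ⟨d, hd⟩ := id hLsuf
      have hdne : d ≠ [] := by
        intro h; rw [h] at hd; simp at hd
        rw [hd] at hLlt; simp at hLlt
      have hpsufL : p <:+ L := rw_suffix_of_suffix_length_le (List.suffix_append x p) hLsuf hpL
      rcases eq_or_lt_of_le hpL with hpeq | hplt
      · -- L = p ; but p is also a prefix of u, occurring inside u'
        have hLp : p = L := hpsufL.eq_of_length_le (le_of_eq hpeq.symm)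
        have hppreu : p <+: u := List.prefix_of_prefix_length_le hppre hupre (by omega)
        obtain ⟨z, hz⟩ := hppreu
        have hzne : z ≠ [] := by
          intro h
          subst h
          have h2 := congrArg List.length hz
          simp only [List.append_nil] at h2
          rw [h2] at hulen
          omega
        obtain ⟨z', c₁, hz'⟩ := (rw_concat z).resolve_left hzne
        have h2 : (p ++ z') ++ [c₁] = u' ++ [c₀] := by
          rw [← hu', ← hz, hz']; simp [List.append_assoc]
        obtain ⟨h1, _⟩ := List.append_inj' h2 rfl
        exact hLni (by rw [← hLp]; exact ⟨[], z', by simpa using h1⟩)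
      · -- p a proper prefix of L : a new occurrence of p further left
        obtain ⟨g, hg⟩ := (rw_pal_suffix_prefix hppal hLpal hpsufL)
        have hgne : g ≠ [] := by
          intro h; rw [h] at hg; simp at hg
          rw [hg] at hplt; simp at hplt
        have hdlen : d.length ≤ n := by
          have h2 := congrArg List.length hd
          simp [hulen] at h2
          have h3 := congrArg List.length hg
          simp at h3
          have hgpos : 0 < g.length := List.length_pos_iff.2 hgne
          omega
        apply ih d (g ++ y) hdlen ?_ hdne (by simp [hgne])
        rw [hw, ← hd, ← hg]
        simp [List.append_assoc]

/-- Lemma E : richness of the palindromic-closure-style extension. -/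
lemma rw_closure_rich : ∀ (s : List A) (p w : List A), Rich w → IsLPPS w p → w = s ++ p →
    Rich (w ++ s.reverse) := by
  intro s
  induction s using List.reverseRecOn with
  | nil => intro p w hrich _ _; simpa using hrich
  | append_singleton s' c ih =>
    intro p w hrich hlpps hw
    obtain ⟨hppal, hpsuf, hpne, hpmax⟩ := hlpps
    have hQpal : ([c] ++ p ++ [c]).reverse = [c] ++ p ++ [c] := by
      simp [List.reverse_append, hppal]
    have hQsuf : ([c] ++ p ++ [c]) <:+ w ++ [c] := ⟨s', by rw [hw]; simp [List.append_assoc]⟩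
    have hQnotinf : ¬ ([c] ++ p ++ [c]) <:+: w := by
      rintro ⟨x, y, hxy⟩
      have hocc : w = (x ++ [c]) ++ p ++ ([c] ++ y) := by
        rw [← hxy]; simp [List.append_assoc]
      by_cases hwpal : w.reverse = w
      · exact rw_lpps_occurrence hrich hwpal ⟨hppal, hpsuf, hpne, hpmax⟩ _ _ hocc (by simp) (by simp)
      · have hwne : w ≠ [] := by
          rintro rfl
          exact hpne (List.suffix_nil.mp hpsuf)
        obtain ⟨w'', c₁, hw''⟩ := (rw_concat w).resolve_left hwne
        have hni : ¬ p <:+: w'' := by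
          apply rw_lps_not_infix (p := p) (by rwa [← hw'']) hppal (by rwa [← hw''])
          intro q hq1 hq2
          rcases eq_or_ne q (w'' ++ [c₁]) with rfl | hne
          · exact absurd (by rwa [hw'']) hwpal
          · exact hpmax q hq1 (by rwa [hw'']) (by rwa [← hw''] at hne)
        apply hni
        rcases rw_concat y with rfl | ⟨y', c₂, rfl⟩
        · have h2 : ((x ++ [c]) ++ p) ++ [c] = w'' ++ [c₁] := by
            rw [← hw'', hocc]; simp [List.append_assoc]
          obtain ⟨h1, _⟩ := List.append_inj' h2 rfl
          exact ⟨x ++ [c], [], by simpa using h1⟩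
        · have h3 : ((x ++ [c]) ++ p ++ ([c] ++ y')) ++ [c₂] = w'' ++ [c₁] := by
            rw [← hw'', hocc]; simp [List.append_assoc]
          obtain ⟨h1, _⟩ := List.append_inj' h3 rfl
          exact ⟨x ++ [c], [c] ++ y', h1⟩
    have hrich' : Rich (w ++ [c]) := rw_rich_concat_of_new hrich hQpal hQsuf hQnotinf
    rcases eq_or_ne s' [] with rfl | hs'ne
    · simpa using hrich'
    · have hwc : w ++ [c] = s' ++ ([c] ++ p ++ [c]) := by rw [hw]; simp [List.append_assoc]
      have hlpps' : IsLPPS (w ++ [c]) ([c] ++ p ++ [c]) := by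
        refine ⟨hQpal, hQsuf, ?_, ?_⟩
        · intro h
          have h2 : ([c] ++ p ++ [c]).length = (w ++ [c]).length := congrArg List.length h
          rw [hw] at h2
          simp only [List.length_append, List.length_singleton] at h2
          exact hs'ne (List.length_eq_zero_iff.1 (by omega))
        · intro q hq1 hq2 hq3
          by_contra hlt
          push_neg at hlt
          have hQlen : ([c] ++ p ++ [c]).length = p.length + 2 := by simp
          have hqlen : p.length + 2 < q.length := by omega
          have hqne : q ≠ [] := by
            rintro rfl; simp at hqlen
          obtain ⟨q'', c₂, hq''⟩ := (rw_concat q).resolve_left hqne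
          obtain ⟨z, hz⟩ := id hq2
          have h2 : (z ++ q'') ++ [c₂] = w ++ [c] := by
            rw [← hz, hq'']; simp [List.append_assoc]
          obtain ⟨h1, h1c⟩ := List.append_inj' h2 rfl
          have hc₂ : c₂ = c := by simpa using h1c
          rw [hc₂] at hq''
          have hq''suf : q'' <:+ w := ⟨z, h1⟩
          have hqq : q'' ++ [c] = c :: q''.reverse := by
            have h4 := hq1
            rw [hq''] at h4
            simpa [List.reverse_append] using h4.symm
          have hq''ne : q'' ≠ [] := by
            rintro rfl
            rw [hq''] at hqlen; simp at hqlen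
          obtain ⟨a, r, har⟩ := List.exists_cons_of_ne_nil hq''ne
          rw [har, List.cons_append] at hqq
          injection hqq with ha htail
          rw [ha] at htail
          have hrev : r ++ [c] = r.reverse ++ [c] := by simpa using htail
          have hrpal : r.reverse = r := ((List.append_inj' hrev rfl).1).symm
          have hrsuf : r <:+ w := by
            rw [har] at hq''suf
            exact List.IsSuffix.trans ⟨[a], rfl⟩ hq''suf
          have hqlen' : q.length = r.length + 2 := by rw [hq'', har]; simp
          have hqltw : q.length < w.length + 1 := by
            have hle := List.IsSuffix.length_le hq2
            simp only [List.length_append, List.length_singleton] at hle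
            rcases eq_or_lt_of_le hle with heq | hlt2
            · exact absurd (hq2.eq_of_length_le (by simp; omega)) hq3
            · exact hlt2
          have hrne : r ≠ w := by
            intro h; rw [h] at hqlen'; omega
          have := hpmax r hrpal hrsuf hrne
          omega
      have h6 := ih ([c] ++ p ++ [c]) (w ++ [c]) hrich' hlpps' hwc
      simpa [List.append_assoc] using h6

lemma rw_take_succ {A : Type*} {l : List A} {i : ℕ} (h : i < l.length) :
    l.take (i+1) = l.take i ++ [l.get ⟨i, h⟩] := by
  rw [← List.take_concat_get h, List.concat_eq_append]
  rfl

theorem stmt10 {A : Type*} (v vb u : List A)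
    (hv : Rich v) (hvb : Rich vb) (hu : Rich u)
    (hvne : v ≠ []) (hvbne : vb ≠ []) (hune : u ≠ [])
    (hure : UniqueRichExt (v ++ vb) (v ++ vb ++ u))
    (hlpps : IsLPPS (v ++ vb) vb) :
    (u.length ≤ v.length → u.reverse <:+ v) ∧
    (v.length ≤ u.length → v.reverse <+: u) := by
  obtain ⟨hrichfull, hpre, huniq⟩ := hure
  have hwrich : Rich (v ++ vb) := rw_rich_prefix hrichfull
  have hclosure : Rich ((v ++ vb) ++ v.reverse) :=
    rw_closure_rich v vb (v ++ vb) hwrich hlpps rfl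
  have htake : ∀ i : ℕ, i ≤ u.length → i ≤ v.length → u.take i = v.reverse.take i := by
    intro i
    induction i with
    | zero => intro _ _; simp
    | succ i ih =>
      intro hi1 hi2
      have hiu : i < u.length := by omega
      have hiv : i < v.reverse.length := by simp; omega
      have hih := ih (by omega) (by omega)
      set W : List A := (v ++ vb) ++ u.take i with hW
      have hWa : W ++ [u.get ⟨i, hiu⟩] = (v ++ vb) ++ u.take (i + 1) := by
        rw [hW, rw_take_succ hiu, List.append_assoc]
      have hWb : W ++ [v.reverse.get ⟨i, hiv⟩] = (v ++ vb) ++ v.reverse.take (i + 1) := by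
        rw [hW, hih, rw_take_succ hiv, List.append_assoc]
      have hra : Rich (W ++ [u.get ⟨i, hiu⟩]) := by
        rw [hWa]
        apply rw_rich_of_prefix _ hrichfull
        exact ⟨u.drop (i+1), by simp [List.append_assoc]⟩
      have hrb : Rich (W ++ [v.reverse.get ⟨i, hiv⟩]) := by
        rw [hWb]
        apply rw_rich_of_prefix _ hclosure
        exact ⟨v.reverse.drop (i+1), by simp [List.append_assoc]⟩
      have hnt : ¬ TwoWays W := by
        apply huniq W ⟨u.take i, rfl⟩ ⟨u.drop i, by simp [hW, List.append_assoc]⟩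
        intro h
        have h2 := congrArg List.length h
        simp [hW, List.length_take, min_eq_left (le_of_lt hiu)] at h2
        omega
      have heq : u.get ⟨i, hiu⟩ = v.reverse.get ⟨i, hiv⟩ := by
        by_contra hne
        exact hnt ⟨_, _, hne, hra, hrb⟩
      calc u.take (i+1) = u.take i ++ [u.get ⟨i, hiu⟩] := rw_take_succ hiu
        _ = v.reverse.take i ++ [v.reverse.get ⟨i, hiv⟩] := by rw [hih, heq]
        _ = v.reverse.take (i+1) := (rw_take_succ hiv).symm
  constructor
  · intro hle
    have h1 : u = v.reverse.take u.length := by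
      rw [← htake u.length le_rfl hle, List.take_length]
    have h2 : u <+: v.reverse := h1 ▸ List.take_prefix _ _
    have h3 := List.reverse_suffix.2 h2
    rwa [List.reverse_reverse] at h3
  · intro hle
    have h1 : v.reverse = u.take v.length := by
      have h2 : v.reverse.take v.length = v.reverse := by
        rw [← List.length_reverse (as := v), List.take_length]
      rw [← htake v.length hle le_rfl] at h2
      exact h2.symm
    exact h1 ▸ List.take_prefix _ _
end

section
/- Let w, wx be rich words with x a letter, and suppose ytx is a suffix of wx where y ≠ x are letters, t is a palindrome, and ytx is reverse-unioccurrent in wx (the total number of occurrences of ytx and its reversal in wx is 1). Then wx is not the right standard extension of w. -/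
def occ {A : Type*} [DecidableEq A] (u v : List A) : ℕ :=
  ((List.range (u.length + 1)).filter (fun i => v.isPrefixOf (u.drop i))).length
/-- `v` is the right standard extension of `w`. -/
def IsRSE {A : Type*} (w v : List A) : Prop :=
  ∃ (x : A) (p : List A), IsLPPS w p ∧ (x :: p) <:+ w ∧ v = w ++ [x]

lemma occ_pos {A : Type*} [DecidableEq A] {u v : List A} (h : v <:+: u) : 0 < occ u v := by
  obtain ⟨s, r, hsr⟩ := h
  apply List.length_pos_of_mem (a := s.length)
  rw [List.mem_filter, List.mem_range, List.isPrefixOf_iff_prefix]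
  constructor
  · have : s.length ≤ u.length := by
      rw [← hsr]; simp [List.length_append]
    omega
  · rw [← hsr, List.append_assoc, List.drop_left]
    exact List.prefix_append v r

lemma suffix_of_suffix_length_le_s13 {A : Type*} {l₁ l₂ l₃ : List A}
    (h₁ : l₁ <:+ l₃) (h₂ : l₂ <:+ l₃) (h : l₁.length ≤ l₂.length) : l₁ <:+ l₂ := by
  rw [← List.reverse_prefix] at h₁ h₂ ⊢
  exact List.prefix_of_prefix_length_le h₁ h₂ (by simpa using h)

theorem stmt13 {A : Type*} [DecidableEq A] (w t : List A) (x y : A)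
    (hw : Rich w) (hwx : Rich (w ++ [x])) (hxy : y ≠ x)
    (hpal : t.reverse = t)
    (hsuf : (y :: (t ++ [x])) <:+ (w ++ [x]))
    (hocc : occ (w ++ [x]) (y :: (t ++ [x]))
          + occ (w ++ [x]) (y :: (t ++ [x])).reverse = 1) :
    ¬ IsRSE w (w ++ [x]) := by
  rintro ⟨z, p, ⟨hppal, hpw, hpne, hmax⟩, hzp, heq⟩
  -- z = x
  have hz : z = x := by
    have := List.append_cancel_left heq
    simpa using this.symm
  subst z
  -- y :: t is a suffix of w
  have hytw : (y :: t) <:+ w := by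
    obtain ⟨s, hs⟩ := hsuf
    have hs' : (s ++ (y :: t)) ++ [x] = w ++ [x] := by
      simpa [List.append_assoc] using hs
    exact ⟨s, List.append_cancel_right hs'⟩
  have htw : t <:+ w := (List.suffix_cons y t).trans hytw
  have htnew : t ≠ w := by
    rintro rfl
    have := hytw.length_le
    simp at this
  have htlen : t.length ≤ p.length := hmax t hpal htw htnew
  have htp : t <:+ p := suffix_of_suffix_length_le_s13 htw hpw htlen
  -- t ≠ p, hence length <
  have htnep : t ≠ p := by
    rintro rfl
    have h1 : (y :: t) <:+ w := hytw
    have h2 : (x :: t) <:+ w := hzp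
    have := suffix_of_suffix_length_le_s13 h1 h2 (by simp)
    have := this.eq_of_length (by simp)
    exact hxy (by injection this)
  have hlt : t.length < p.length := lt_of_le_of_ne htlen (fun h => htnep (htp.eq_of_length h))
  -- t is a prefix of p (palindromes)
  have htpp : t <+: p := by
    have := htp
    rw [← List.reverse_prefix] at this
    rwa [hpal, hppal] at this
  obtain ⟨r, hr⟩ := htpp
  obtain ⟨c, s, rfl⟩ : ∃ c s, r = c :: s := by
    cases r with
    | nil => exfalso; rw [← hr] at hlt; simp at hlt
    | cons c s => exact ⟨c, s, rfl⟩
  -- letter after t in p is y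
  have hyc : y = c := by
    have hytp : (y :: t) <:+ p := suffix_of_suffix_length_le_s13 hytw hpw (by simpa using hlt)
    have h1 : (t ++ [y]) <+: p := by
      have := hytp
      rw [← List.reverse_prefix] at this
      rw [hppal] at this
      simpa [hpal] using this
    have h2 : (t ++ [c]) <+: p := ⟨s, by rw [← hr]; simp⟩
    have := (List.prefix_of_prefix_length_le h1 h2 (by simp)).eq_of_length (by simp)
    have := List.append_cancel_left this
    simpa using this
  subst hyc
  -- x :: t ++ [c] is an infix of w ++ [x]
  have hinf : (x :: (t ++ [y])) <:+: (w ++ [x]) := by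
    have h1 : (x :: (t ++ [y])) <+: (x :: p) := by
      rw [← hr]
      exact ⟨s, by simp⟩
    have h2 : (x :: p) <:+: (w ++ [x]) :=
      hzp.isInfix.trans (List.prefix_append w [x]).isInfix
    exact h1.isInfix.trans h2
  have hrev : (y :: (t ++ [x])).reverse = x :: (t ++ [y]) := by
    simp [hpal]
  have o1 : 0 < occ (w ++ [x]) (y :: (t ++ [x])) := occ_pos hsuf.isInfix
  have o2 : 0 < occ (w ++ [x]) (y :: (t ++ [x])).reverse := by
    rw [hrev]; exact occ_pos hinf
  omega
end

section
/- If w is rich and t = x·p·y is a switch occurring as a factor of w (x ≠ y letters, p a palindrome), then there is a prefix v of w such that v is a flexed point of w (i.e., v is not the right standard extension of v with its last letter removed) and either t or its reversal is a suffix of v. -/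
/-- `v` is a flexed point of `w`. -/
def FlexedPoint {A : Type*} (w v : List A) : Prop :=
  v <+: w ∧ ∃ (p : List A) (x : A), v = p ++ [x] ∧ ¬ IsRSE p v

lemma suf_eq_of_len {A : Type*} {l₁ l₂ u : List A} (h₁ : l₁ <:+ u) (h₂ : l₂ <:+ u)
    (h : l₁.length = l₂.length) : l₁ = l₂ := by
  obtain ⟨t₁, ht₁⟩ := h₁
  obtain ⟨t₂, ht₂⟩ := h₂
  exact (List.append_inj' (ht₁.trans ht₂.symm) h).2

lemma concat_suffix_concat {A : Type*} {l₁ l₂ : List A} {b c : A}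
    (h : (l₁ ++ [b]) <:+ (l₂ ++ [c])) : b = c ∧ l₁ <:+ l₂ := by
  obtain ⟨t, ht⟩ := h
  rw [← List.append_assoc] at ht
  obtain ⟨h1, h2⟩ := List.append_inj' ht (by simp)
  exact ⟨by simpa using h2, t, h1⟩

/-- Key combinatorial step: if `u` ends with `x·p` and the RSE condition holds with
letter `y ≠ x`, then `y·p·x` occurs ending somewhere inside `u`. -/
lemma aux_switch {A : Type*} {u p s : List A} {x y : A} (hxy : x ≠ y) (hpal : p.reverse = p)
    (hxp : (x :: p) <:+ u) (hlpps : IsLPPS u s) (hys : (y :: s) <:+ u) :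
    ∃ m : List A, m <+: u ∧ (y :: (p ++ [x])) <:+ m := by
  obtain ⟨hs_pal, hs_suf, hs_ne, hs_max⟩ := hlpps
  have hp_suf : p <:+ u := (List.suffix_cons x p).trans hxp
  have hp_lt : p.length < u.length := by
    have := hxp.length_le; simpa using this
  have hps : p.length ≤ s.length :=
    hs_max p hpal hp_suf (fun h => by simp [h] at hp_lt)
  rcases eq_or_lt_of_le hps with heq | hlt
  · -- s = p, so x::p and y::p are equal-length suffixes of u: x = y, contradiction
    have : y :: s = x :: p := suf_eq_of_len hys hxp (by simp [heq])
    exact absurd (List.cons.injEq .. ▸ this).1.symm hxy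
  · -- x::p is a suffix of s; by palindromicity p++[x] is a prefix of s
    have hxps : (x :: p) <:+ s :=
      List.suffix_of_suffix_length_le hxp hs_suf (by simpa using hlt)
    obtain ⟨r, hr⟩ := hxps
    have hs_eq : s = (p ++ [x]) ++ r.reverse := by
      conv_lhs => rw [← hs_pal, ← hr]
      simp [hpal]
    obtain ⟨u', hu'⟩ := hys
    refine ⟨u' ++ (y :: (p ++ [x])), ⟨r.reverse, ?_⟩, List.suffix_append _ _⟩
    rw [← hu', hs_eq]
    simp

theorem stmt14 {A : Type*} (w p : List A) (x y : A)
    (hw : Rich w) (hxy : x ≠ y) (hpal : p.reverse = p)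
    (hfac : (x :: (p ++ [y])) <:+: w) :
    ∃ v : List A, FlexedPoint w v ∧
      ((x :: (p ++ [y])) <:+ v ∨ (x :: (p ++ [y])).reverse <:+ v) := by
  classical
  set T := x :: (p ++ [y]) with hT
  have hTrev : T.reverse = y :: (p ++ [x]) := by simp [hT, hpal]
  set P : ℕ → Prop := fun n => T <:+ w.take n ∨ T.reverse <:+ w.take n with hP
  have hPex : ∃ n, P n := by
    obtain ⟨l, r, hlr⟩ := hfac
    refine ⟨(l ++ T).length, Or.inl ?_⟩
    have hpre : (l ++ T) <+: w := ⟨r, by simp [← hlr]⟩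
    rw [← List.prefix_iff_eq_take.mp hpre]
    exact List.suffix_append _ _
  set n := Nat.find hPex with hn
  set v := w.take n with hv
  have hvpre : v <+: w := List.take_prefix n w
  have hvP : P v.length := by
    have h1 : w.take v.length = v := (List.prefix_iff_eq_take.mp hvpre).symm
    have := Nat.find_spec hPex
    rw [hP]; dsimp only; rw [h1]; exact this
  have hvlen : v.length = n :=
    le_antisymm (by simp [hv]) (Nat.find_min' hPex hvP)
  have hdisj : T <:+ v ∨ T.reverse <:+ v := Nat.find_spec hPex
  have hvne : v ≠ [] := by
    rcases hdisj with h | h <;>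
      · intro hnil; rw [hnil] at h; simp [List.suffix_nil, hT] at h
  obtain ⟨u, c, hvu⟩ : ∃ u c, v = u ++ [c] :=
    ⟨v.dropLast, v.getLast hvne, (List.dropLast_append_getLast hvne).symm⟩
  -- minimality: nothing shorter than v works
  have hmin : ∀ m : List A, m <+: w → m.length < v.length →
      ¬(T <:+ m ∨ T.reverse <:+ m) := by
    intro m hm hlt hsuf
    have hne := Nat.find_min hPex (show m.length < n from hvlen ▸ hlt)
    apply hne
    rw [hP]; dsimp only; rw [← List.prefix_iff_eq_take.mp hm]; exact hsuf
  have hupre : u <+: w := (hvu ▸ (List.prefix_append u [c]) : u <+: v).trans hvpre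
  have hulen : u.length < v.length := by rw [hvu]; simp
  refine ⟨v, ⟨hvpre, u, c, hvu, ?_⟩, hdisj⟩
  rintro ⟨a, s, hlpps, has, hveq⟩
  have hac : a = c := by
    have : u ++ [a] = u ++ [c] := hveq ▸ hvu
    simpa using this
  subst hac
  rcases hdisj with hsf | hsf
  · -- v ends with x·p·y ; last letter is y, u ends with x·p
    rw [hvu, hT] at hsf
    have hsf' : (x :: p) ++ [y] <:+ u ++ [a] := by simpa using hsf
    obtain ⟨hay, hxpu⟩ := concat_suffix_concat hsf'
    subst hay
    obtain ⟨m, hmu, hmsuf⟩ := aux_switch hxy hpal hxpu hlpps has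
    refine hmin m (hmu.trans hupre) (lt_of_le_of_lt hmu.length_le hulen) (Or.inr ?_)
    rwa [hTrev]
  · -- v ends with y·p·x ; last letter is x, u ends with y·p
    rw [hvu, hTrev] at hsf
    have hsf' : (y :: p) ++ [x] <:+ u ++ [a] := by simpa using hsf
    obtain ⟨hax, hypu⟩ := concat_suffix_concat hsf'
    subst hax
    obtain ⟨m, hmu, hmsuf⟩ := aux_switch hxy.symm hpal hypu hlpps has
    refine hmin m (hmu.trans hupre) (lt_of_le_of_lt hmu.length_le hulen) (Or.inl ?_)
    rwa [hT]
end

section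
/- Let w, u, v̄ be nonempty words over alphabet A such that w·u^R·v̄·u is rich, v̄ is the longest palindromic suffix of w·u^R·v̄, every letter of A occurs in w, and for every switch s that is a suffix of w·u^R·v̄·t for some nonempty prefix t of u, the switch palindromic closure of s is a factor of w. Then w·u^R·v̄·u is a unique rich extension of w·u^R·v̄. -/
section Aux

variable {A : Type*}

/-- The set of palindromic factors of a word. -/
def palSet (v : List A) : Set (List A) := {p | p.reverse = p ∧ p <:+: v}

lemma palSet_finite (v : List A) : (palSet v).Finite := by
  apply Set.Finite.subset v.sublists.finite_toSet
  intro p hp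
  simpa using hp.2.sublist

/-- Every word has a longest palindromic suffix. -/
lemma exists_lps (s : List A) :
    ∃ m : List A, m.reverse = m ∧ m <:+ s ∧
      ∀ q : List A, q.reverse = q → q <:+ s → q.length ≤ m.length := by
  have hfin : {q : List A | q.reverse = q ∧ q <:+ s}.Finite := by
    apply Set.Finite.subset s.sublists.finite_toSet
    intro q hq
    simpa using hq.2.sublist
  have hne : {q : List A | q.reverse = q ∧ q <:+ s}.Nonempty :=
    ⟨[], by simp⟩
  obtain ⟨m, hm, hmax⟩ := Set.Finite.exists_maximalFor List.length _ hfin hne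
  refine ⟨m, hm.1, hm.2, fun q hq1 hq2 => ?_⟩
  by_contra h
  push_neg at h
  have := hmax (j := q) ⟨hq1, hq2⟩ h.le
  omega

/-- Stripping the last letter of an occurrence that does not touch the end. -/
lemma infix_of_concat_eq {s p t' v : List A} {y y' : A}
    (h : s ++ (p ++ (t' ++ [y'])) = v ++ [y]) : p <:+: v := by
  have h2 : (s ++ (p ++ t')) ++ [y'] = v ++ [y] := by
    simpa [List.append_assoc] using h
  obtain ⟨h3, -⟩ := List.append_inj' h2 rfl
  exact ⟨s, t', by simpa [List.append_assoc] using h3⟩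

/-- Every palindromic factor of `v ++ [y]` is a palindromic factor of `v`,
or is the longest palindromic suffix of `v ++ [y]`. -/
lemma pal_factor_cases {v : List A} {y : A} {m : List A}
    (hm1 : m.reverse = m) (hm2 : m <:+ v ++ [y])
    (hm3 : ∀ q : List A, q.reverse = q → q <:+ v ++ [y] → q.length ≤ m.length)
    {p : List A} (hp : p.reverse = p) (hpf : p <:+: v ++ [y]) :
    p <:+: v ∨ p = m := by
  by_cases hpv : p <:+: v
  · exact Or.inl hpv
  right
  obtain ⟨s, t, hst⟩ := hpf
  rcases t.eq_nil_or_concat with rfl | ⟨t', y', rfl⟩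
  · -- p is a suffix of v ++ [y]
    have hpsuf : p <:+ v ++ [y] := ⟨s, by simpa using hst⟩
    have hlen : p.length ≤ m.length := hm3 p hp hpsuf
    have hpm : p <:+ m := List.suffix_of_suffix_length_le hpsuf hm2 hlen
    rcases eq_or_lt_of_le hlen with heq | hlt
    · exact hpm.eq_of_length heq
    · exfalso
      apply hpv
      -- p is a prefix of m, occurring strictly before the end
      have hpm' : p <+: m := by
        rw [← List.reverse_prefix] at hpm
        rwa [hp, hm1] at hpm
      obtain ⟨r, hr⟩ := hpm'
      have hrne : r ≠ [] := by
        intro h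
        subst h
        simp at hr
        subst hr
        omega
      obtain ⟨r', y', rfl⟩ := r.eq_nil_or_concat.resolve_left hrne
      obtain ⟨z, hz⟩ := hm2
      rw [← hr] at hz
      exact infix_of_concat_eq (by simpa [List.append_assoc, List.concat_eq_append] using hz)
  · exact absurd (infix_of_concat_eq (by simpa [List.concat_eq_append] using hst)) hpv

/-- A word of length `n` has at most `n + 1` palindromic factors. -/
lemma palSet_ncard_le (v : List A) : (palSet v).ncard ≤ v.length + 1 := by
  induction v using List.reverseRecOn with
  | nil =>
    have h : palSet ([] : List A) = {([] : List A)} := by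
      ext p
      constructor
      · rintro ⟨-, h2⟩
        simpa using h2.sublist
      · rintro rfl
        exact ⟨rfl, List.infix_rfl⟩
    rw [h]
    simp
  | append_singleton v y ih =>
    obtain ⟨m, hm1, hm2, hm3⟩ := exists_lps (v ++ [y])
    have hsub : palSet (v ++ [y]) ⊆ insert m (palSet v) := by
      rintro p ⟨hp1, hp2⟩
      rcases pal_factor_cases hm1 hm2 hm3 hp1 hp2 with h | rfl
      · exact Set.mem_insert_of_mem _ ⟨hp1, h⟩
      · exact Set.mem_insert _ _
    have h1 : (palSet (v ++ [y])).ncard ≤ (insert m (palSet v)).ncard :=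
      Set.ncard_le_ncard hsub ((palSet_finite v).insert m)
    have h2 : (insert m (palSet v)).ncard ≤ (palSet v).ncard + 1 :=
      Set.ncard_insert_le _ _
    simp only [List.length_append, List.length_singleton]
    omega

/-- In a rich word, the longest palindromic suffix is new: it is not a factor of
the word with the last letter removed. -/
lemma lps_not_infix {v : List A} {y : A} (hr : Rich (v ++ [y]))
    {m : List A} (hm1 : m.reverse = m) (hm2 : m <:+ v ++ [y])
    (hm3 : ∀ q : List A, q.reverse = q → q <:+ v ++ [y] → q.length ≤ m.length) :
    ¬ m <:+: v := by
  intro hmv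
  have hsub : palSet (v ++ [y]) ⊆ palSet v := by
    rintro p ⟨hp1, hp2⟩
    rcases pal_factor_cases hm1 hm2 hm3 hp1 hp2 with h | rfl
    · exact ⟨hp1, h⟩
    · exact ⟨hm1, hmv⟩
  have h1 : (palSet (v ++ [y])).ncard ≤ (palSet v).ncard :=
    Set.ncard_le_ncard hsub (palSet_finite v)
  have h2 := palSet_ncard_le v
  have h3 : (palSet (v ++ [y])).ncard = (v ++ [y]).length + 1 := hr
  simp only [List.length_append, List.length_singleton] at h3
  omega

/-- Key lemma: extending by a letter different from the unique continuation letter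
cannot be rich. -/
lemma key_lemma {w W : List A} (hW : w <+: W) {u t r : List A} {a : A}
    (hu : u = t ++ a :: r)
    (hletters : ∀ b : A, b ∈ w)
    (hswc : ∀ (x y : A) (p : List A), x ≠ y → p.reverse = p →
      (∃ t' : List A, t' <+: u ∧ t' ≠ [] ∧ (x :: (p ++ [y])) <:+ (W ++ t')) →
      (x :: (p ++ [x])) <:+: w)
    {y : A} (hya : y ≠ a) (hr : Rich (W ++ t ++ [y])) : False := by
  obtain ⟨m, hm1, hm2, hm3⟩ := exists_lps (W ++ t ++ [y])
  have hnotinf : ¬ m <:+: (W ++ t) := lps_not_infix hr hm1 hm2 hm3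
  have hwWt : w <+: W ++ t := hW.trans ⟨t, rfl⟩
  -- m is nonempty
  have hmne : m ≠ [] := by
    intro h
    subst h
    have := hm3 [y] (by simp) (List.suffix_append _ [y])
    simp at this
  -- m ends with y
  obtain ⟨m', c, rfl⟩ := m.eq_nil_or_concat.resolve_left hmne
  obtain ⟨z, hz⟩ := hm2
  rw [List.concat_eq_append, ← List.append_assoc] at hz
  obtain ⟨hz1, hz2⟩ := List.append_inj' hz rfl
  have hcy : y = c := by simpa using hz2.symm
  subst hcy
  -- m' is nonempty (otherwise m = [y] which is a factor of w ⊆ W ++ t)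
  rcases m'.eq_nil_or_concat with rfl | hm'c
  · apply hnotinf
    obtain ⟨s, t', hst⟩ := List.append_of_mem (hwWt.sublist.subset (hletters y))
    refine ⟨s, t', ?_⟩
    simp only [List.concat_eq_append, List.nil_append]
    simpa using hst.symm
  obtain ⟨c, q, rfl⟩ : ∃ c q, m' = c :: q := by
    rcases m' with _ | ⟨c, q⟩
    · simp_all [List.concat_eq_append]
    · exact ⟨c, q, rfl⟩
  -- from palindromicity, c = y and q is a palindrome
  rw [List.concat_eq_append] at hm1
  have hm1' : y :: (q.reverse ++ [c]) = c :: (q ++ [y]) := by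
    simpa [List.reverse_append] using hm1
  have hcy : y = c := by
    have := congrArg (fun l => List.head? l) hm1'
    simpa using this
  subst hcy
  have hqpal : q.reverse = q := by
    have := hm1'
    simp only [List.cons.injEq] at this
    have h2 := this.2
    have := List.append_inj' h2 rfl
    exact this.1
  -- y :: q is a suffix of W ++ t, hence y :: (q ++ [a]) is a suffix of W ++ (t ++ [a])
  have hsw : (y :: (q ++ [a])) <:+ W ++ (t ++ [a]) := by
    refine ⟨z, ?_⟩
    have : z ++ (y :: q) = W ++ t := hz1
    calc z ++ (y :: (q ++ [a])) = (z ++ (y :: q)) ++ [a] := by simp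
    _ = (W ++ t) ++ [a] := by rw [this]
    _ = W ++ (t ++ [a]) := by simp
  -- apply the switch hypothesis
  have hfac : (y :: (q ++ [y])) <:+: w := by
    refine hswc y a q hya hqpal ⟨t ++ [a], ⟨r, by simpa using hu.symm⟩, by simp, hsw⟩
  apply hnotinf
  rw [List.concat_eq_append]
  have : (y :: q) ++ [y] = y :: (q ++ [y]) := by simp
  rw [this]
  exact hfac.trans hwWt.isInfix

end Aux

theorem stmt15 {A : Type*} (w u vb : List A)
    (hwne : w ≠ []) (hune : u ≠ []) (hvbne : vb ≠ [])
    (hrich : Rich (w ++ u.reverse ++ vb ++ u))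
    (hpal : vb.reverse = vb) (hsuf : vb <:+ (w ++ u.reverse ++ vb))
    (hlps : ∀ q : List A, q.reverse = q → q <:+ (w ++ u.reverse ++ vb) →
      q.length ≤ vb.length)
    (hletters : ∀ a : A, a ∈ w)
    (hswc : ∀ (x y : A) (p : List A), x ≠ y → p.reverse = p →
      (∃ t : List A, t <+: u ∧ t ≠ [] ∧
        (x :: (p ++ [y])) <:+ (w ++ u.reverse ++ vb ++ t)) →
      (x :: (p ++ [x])) <:+: w) :
    UniqueRichExt (w ++ u.reverse ++ vb) (w ++ u.reverse ++ vb ++ u) := by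
  set W := w ++ u.reverse ++ vb with hWdef
  have hwW : w <+: W := (List.prefix_append w u.reverse).trans ⟨vb, rfl⟩
  refine ⟨hrich, ⟨u, rfl⟩, ?_⟩
  rintro v hWv hvWu hvne ⟨x, y, hxy, hrx, hry⟩
  obtain ⟨t, rfl⟩ := hWv
  have htu : t <+: u := (List.prefix_append_right_inj W).mp hvWu
  have htne : t ≠ u := fun h => hvne (by rw [h])
  obtain ⟨s, hs⟩ := htu
  have hsne : s ≠ [] := by
    intro h
    subst h
    simp at hs
    exact htne hs
  obtain ⟨a, r, rfl⟩ := List.exists_cons_of_ne_nil hsne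
  by_cases hxa : x = a
  · have hya : y ≠ a := fun h => hxy (hxa.trans h.symm)
    exact key_lemma hwW hs.symm hletters hswc hya hry
  · exact key_lemma hwW hs.symm hletters hswc hxa hrx
end

section
/- Define words over {0,1} by g_1 = 1 and g_n = g_{n-1}·0·1^n·0·g_{n-1} for n > 1. Then for all n ≥ 2 and k ≥ 2, the word 0^k·g_n is rich. -/
/-- The words `g 1 = 1`, `g n = g (n-1) ++ 0 ++ 1^n ++ 0 ++ g (n-1)` over `{0,1}`. -/
def g : ℕ → List (Fin 2)
  | 0 => []
  | 1 => [1]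
  | (n+2) => g (n+1) ++ [0] ++ List.replicate (n+2) 1 ++ [0] ++ g (n+1)

open List

namespace RP

open List

variable {A : Type*}

def palSet (w : List A) : Set (List A) := {p | p.reverse = p ∧ p <:+: w}

lemma palSet_finite (w : List A) : (palSet w).Finite := by
  apply Set.Finite.subset (List.finite_toSet (w.tails.flatMap List.inits))
  intro p hp
  obtain ⟨t, hpt, htw⟩ := List.infix_iff_prefix_suffix.mp hp.2
  show p ∈ w.tails.flatMap List.inits
  simp only [List.mem_flatMap, List.mem_tails, List.mem_inits]
  exact ⟨t, htw, hpt⟩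

lemma palSet_mono {w : List A} {x : List A} : palSet w ⊆ palSet (w ++ x) := by
  intro p hp
  exact ⟨hp.1, hp.2.trans (List.prefix_append w x).isInfix⟩

lemma new_suffix {w : List A} {a : A} {s : List A}
    (h : s ∈ palSet (w ++ [a])) (h2 : ¬ s <:+: w) : s <:+ (w ++ [a]) := by
  obtain ⟨u, v, huv⟩ := h.2
  rcases List.eq_nil_or_concat v with rfl | ⟨v', b, rfl⟩
  · exact ⟨u, by simpa using huv⟩
  · exfalso; apply h2
    have h3 : (u ++ s ++ v') ++ [b] = w ++ [a] := by
      rw [← huv]; simp [List.append_assoc]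
    have := congrArg List.dropLast h3
    simp only [List.dropLast_concat] at this
    exact ⟨u, v', by rw [← this]⟩

lemma diff_subsingleton {w : List A} {a : A} {s t : List A}
    (hs : s ∈ palSet (w ++ [a])) (hs2 : ¬ s <:+: w)
    (ht : t ∈ palSet (w ++ [a])) (ht2 : ¬ t <:+: w) : s = t := by
  wlog h : s.length ≤ t.length generalizing s t
  · exact (this ht ht2 hs hs2 (le_of_not_ge h)).symm
  have hss := new_suffix hs hs2
  have hts := new_suffix ht ht2
  have hst : s <:+ t := List.suffix_of_suffix_length_le hss hts h
  have hpre : s <+: t := by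
    have := List.reverse_prefix.mpr hst
    rwa [hs.1, ht.1] at this
  by_contra hne
  obtain ⟨r, rfl⟩ := hpre
  have hr : r ≠ [] := by rintro rfl; simp at hne
  obtain ⟨u, hu⟩ := hts
  rcases List.eq_nil_or_concat r with rfl | ⟨r', b, rfl⟩
  · exact hr rfl
  · apply hs2
    have h3 : (u ++ s ++ r') ++ [b] = w ++ [a] := by
      rw [← hu]; simp [List.append_assoc]
    have := congrArg List.dropLast h3
    simp only [List.dropLast_concat] at this
    exact ⟨u, r', by rw [← this]⟩

lemma ncard_step (w : List A) (a : A) :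
    (palSet (w ++ [a])).ncard ≤ (palSet w).ncard + 1 := by
  by_cases hd : ∀ s ∈ palSet (w ++ [a]), s <:+: w
  · have hsub : palSet (w ++ [a]) ⊆ palSet w := fun p hp => ⟨hp.1, hd p hp⟩
    exact (Set.ncard_le_ncard hsub (palSet_finite w)).trans (Nat.le_succ _)
  · push_neg at hd
    obtain ⟨s₀, hs₀, hs₀2⟩ := hd
    have hsub : palSet (w ++ [a]) ⊆ insert s₀ (palSet w) := by
      intro p hp
      by_cases hpw : p <:+: w
      · exact Set.mem_insert_of_mem _ ⟨hp.1, hpw⟩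
      · rw [diff_subsingleton hp hpw hs₀ hs₀2]; exact Set.mem_insert _ _
    calc (palSet (w ++ [a])).ncard ≤ (insert s₀ (palSet w)).ncard :=
          Set.ncard_le_ncard hsub ((palSet_finite w).insert s₀)
      _ ≤ (palSet w).ncard + 1 := Set.ncard_insert_le _ _

lemma rich_nil : Rich ([] : List A) := by
  unfold Rich
  have : {p : List A | p.reverse = p ∧ p <:+: []} = {[]} := by
    ext p; simp +contextual [List.eq_nil_of_infix_nil]
  rw [this]; simp

lemma rich_ext {w : List A} {a : A} (hw : Rich w) (s : List A)
    (hpal : s.reverse = s) (hinf : s <:+: (w ++ [a])) (hnot : ¬ s <:+: w) :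
    Rich (w ++ [a]) := by
  have hle := ncard_step w a
  have hins : (insert s (palSet w)).ncard = (palSet w).ncard + 1 :=
    Set.ncard_insert_of_notMem (fun hmem => hnot hmem.2) (palSet_finite w)
  have hsub : insert s (palSet w) ⊆ palSet (w ++ [a]) := by
    intro p hp
    rcases hp with rfl | hp
    · exact ⟨hpal, hinf⟩
    · exact palSet_mono hp
  have hge : (palSet w).ncard + 1 ≤ (palSet (w ++ [a])).ncard := by
    rw [← hins]
    exact Set.ncard_le_ncard hsub (palSet_finite _)
  have hrw : (palSet w).ncard = w.length + 1 := hw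
  show (palSet (w ++ [a])).ncard = (w ++ [a]).length + 1
  simp only [List.length_append, List.length_singleton]
  omega


variable {A : Type*}

lemma infix_split {s x y : List A} (h : s <:+: x ++ y) :
    s <:+: x ∨ s <:+: y ∨
    ∃ s₁ s₂, s = s₁ ++ s₂ ∧ s₁ ≠ [] ∧ s₂ ≠ [] ∧ s₁ <:+ x ∧ s₂ <+: y := by
  obtain ⟨u, v, huv⟩ := h
  by_cases h1 : u.length + s.length ≤ x.length
  · left
    have hpre : u ++ s <+: x ++ y := ⟨v, by simpa [List.append_assoc] using huv⟩
    have h2 : u ++ s <+: x :=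
      List.prefix_of_prefix_length_le hpre (List.prefix_append x y) (by simpa using h1)
    exact ((List.suffix_append u s).isInfix).trans h2.isInfix
  · by_cases h2 : x.length ≤ u.length
    · right; left
      have hux : x <+: u :=
        List.prefix_of_prefix_length_le (List.prefix_append x y)
          ⟨s ++ v, by simpa [List.append_assoc] using huv⟩ h2
      obtain ⟨u', rfl⟩ := hux
      refine ⟨u', v, ?_⟩
      have h3 : x ++ (u' ++ s ++ v) = x ++ y := by simpa [List.append_assoc] using huv
      exact List.append_cancel_left h3
    · right; right
      push_neg at h1 h2
      have hs : s = ((x ++ y).drop u.length).take s.length := by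
        rw [← huv]
        rw [List.append_assoc, List.drop_left, List.take_left]
      have hdrop : (x ++ y).drop u.length = x.drop u.length ++ y := by
        rw [List.drop_append, Nat.sub_eq_zero_of_le (le_of_lt h2), List.drop_zero]
      have hlen : (x.drop u.length).length = x.length - u.length := by simp
      have htake : (x.drop u.length ++ y).take s.length
          = x.drop u.length ++ y.take (s.length - (x.length - u.length)) := by
        rw [List.take_append, hlen,
          List.take_of_length_le (by rw [hlen]; omega)]
      refine ⟨x.drop u.length, y.take (s.length - (x.length - u.length)), ?_, ?_, ?_,
        List.drop_suffix _ _, List.take_prefix _ _⟩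
      · conv_lhs => rw [hs]
        rw [hdrop, htake]
      · intro hnil
        have := congrArg List.length hnil
        simp at this; omega
      · intro hnil
        have hln := congrArg List.length hnil
        rw [List.length_take] at hln
        simp only [List.length_nil] at hln
        have hy := congrArg List.length huv
        simp only [List.length_append] at hy
        omega

lemma infix_cons_elim {s y : List A} {a : A} (h : s <:+: a :: y) :
    s <+: a :: y ∨ s <:+: y := by
  obtain ⟨u, v, huv⟩ := h
  cases u with
  | nil => left; exact ⟨v, by simpa using huv⟩
  | cons b u' =>
    right
    refine ⟨u', v, ?_⟩
    have : b :: (u' ++ s ++ v) = a :: y := by simpa using huv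
    exact (List.cons_eq_cons.mp this).2

lemma all_ones_of_infix_rep {m a : ℕ} {c : Fin 2} (h : replicate m (1:Fin 2) <:+: replicate a c)
    (hm : 1 ≤ m) : c = 1 := by
  have h1 : (1:Fin 2) ∈ replicate m (1:Fin 2) := by
    simp [List.mem_replicate]; omega
  have := h.subset h1
  exact (List.eq_of_mem_replicate this).symm

lemma ones_split {m : ℕ} {x y : List (Fin 2)}
    (h : replicate m (1:Fin 2) <:+: x ++ (0:Fin 2) :: y) :
    replicate m 1 <:+: x ∨ replicate m 1 <:+: y := by
  rcases Nat.eq_zero_or_pos m with rfl | hm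
  · left; simpa using List.nil_infix x
  rcases infix_split h with h1 | h1 | ⟨s₁, s₂, hs, hs₁, hs₂, hsx, hsy⟩
  · left; exact h1
  · rcases infix_cons_elim h1 with h2 | h2
    · exfalso
      obtain ⟨t, ht⟩ := h2
      obtain ⟨m', rfl⟩ : ∃ m', m = m' + 1 := ⟨m - 1, by omega⟩
      rw [List.replicate_succ] at ht
      simp only [List.cons_append] at ht
      exact absurd (List.cons_eq_cons.mp ht).1 (by decide)
    · right; exact h2
  · exfalso
    obtain ⟨t, ht⟩ := hsy
    have hmem : (0:Fin 2) ∈ s₂ := by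
      cases s₂ with
      | nil => exact absurd rfl hs₂
      | cons b s₂' =>
        have : b = 0 := (List.cons_eq_cons.mp (by simpa using ht)).1
        rw [this]; exact List.mem_cons_self
    have : (0:Fin 2) ∈ replicate m (1:Fin 2) := by
      rw [hs]; exact List.mem_append_right _ hmem
    exact absurd (List.eq_of_mem_replicate this) (by decide)

lemma ones_not_infix_rep0 {m a : ℕ} (hm : 1 ≤ m) :
    ¬ replicate m (1:Fin 2) <:+: replicate a (0:Fin 2) := fun h =>
  absurd (all_ones_of_infix_rep h hm) (by decide)

lemma ones_le_of_infix_ones {m b : ℕ} (h : replicate m (1:Fin 2) <:+: replicate b 1) : m ≤ b := by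
  have := h.length_le; simpa using this

lemma ones_infix_mono {m m' : ℕ} (h : m ≤ m') :
    replicate m (1:Fin 2) <:+: replicate m' 1 := by
  refine ⟨[], replicate (m' - m) 1, ?_⟩
  simp [← List.replicate_add]; omega

lemma runlem : ∀ m, ¬ (replicate (m+1) (1:Fin 2) <:+: g m)
  | 0 => by intro h; have := h.length_le; simp [g] at this
  | 1 => by intro h; have := h.length_le; simp [g] at this
  | (m+2) => by
    intro h
    have hshape : g (m+2) = g (m+1) ++ (0:Fin 2) :: (replicate (m+2) 1 ++ (0:Fin 2) :: g (m+1)) := by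
      simp [g, List.append_assoc]
    rw [hshape] at h
    rcases ones_split h with h1 | h1
    · exact runlem (m+1) ((ones_infix_mono (by omega)).trans h1)
    · rcases ones_split (x := replicate (m+2) 1) h1 with h2 | h2
      · have := ones_le_of_infix_ones h2; omega
      · exact runlem (m+1) ((ones_infix_mono (by omega)).trans h2)


def M (m : ℕ) : List (Fin 2) := [0] ++ replicate m 1 ++ [0]

lemma M_length (m : ℕ) : (M m).length = m + 2 := by simp [M]

lemma M_reverse (m : ℕ) : (M m).reverse = M m := by simp [M]

lemma ones_infix_M (m : ℕ) : replicate m (1:Fin 2) <:+: M m := ⟨[0], [0], rfl⟩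

lemma prefix_replicate {l : List (Fin 2)} {c : Fin 2} {b : ℕ} (h : l <+: replicate b c) :
    l = replicate l.length c :=
  List.eq_replicate_of_mem fun _ hx => List.eq_of_mem_replicate (h.subset hx)

lemma U1 {u v u' v' : List (Fin 2)} {m : ℕ}
    (h : u ++ M m ++ v = u' ++ M m ++ v') (hlen : u'.length ≤ u.length)
    (hu : ¬ replicate m 1 <:+: u) : u' = u := by
  have hu'p : u' <+: u :=
    List.prefix_of_prefix_length_le ⟨M m ++ v', by simpa [List.append_assoc] using h.symm⟩
      ⟨M m ++ v, by simp [List.append_assoc]⟩ hlen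
  obtain ⟨d, rfl⟩ := hu'p
  rcases List.eq_nil_or_concat d with rfl | hd
  · simp
  exfalso
  have hdne : d ≠ [] := by rcases hd with ⟨a, b, rfl⟩; simp
  simp only [List.append_assoc] at h
  have he : d ++ (M m ++ v) = M m ++ v' := List.append_cancel_left h
  by_cases hbig : (M m).length ≤ d.length
  · have hMd : M m <+: d :=
      List.prefix_of_prefix_length_le (List.prefix_append _ _) ⟨M m ++ v, he⟩ hbig
    exact hu (((ones_infix_M m).trans hMd.isInfix).trans (List.suffix_append u' d).isInfix)
  · push_neg at hbig
    have hdM : d <+: M m :=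
      List.prefix_of_prefix_length_le ⟨M m ++ v, he⟩ (List.prefix_append _ _) (by omega)
    obtain ⟨d0, d', rfl⟩ : ∃ d0 d', d = d0 :: d' := by
      rcases d with _ | ⟨d0, d'⟩
      · exact absurd rfl hdne
      · exact ⟨d0, d', rfl⟩
    have hcons : d0 :: (d' ++ (M m ++ v)) = (0:Fin 2) :: (replicate m 1 ++ ([0] ++ v')) := by
      simpa [M, List.append_assoc] using he
    have hd0 : d0 = 0 := (List.cons_eq_cons.mp hcons).1
    have he' : d' ++ (M m ++ v) = replicate m 1 ++ ([0] ++ v') := (List.cons_eq_cons.mp hcons).2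
    have hd'len : d'.length ≤ m := by
      have hb := hbig
      rw [M_length] at hb
      simp at hb; omega
    have hd'rep : d' <+: replicate m (1:Fin 2) :=
      List.prefix_of_prefix_length_le ⟨M m ++ v, he'⟩ (List.prefix_append _ _)
        (by simpa using hd'len)
    obtain ⟨t, rfl⟩ : ∃ t, d' = replicate t 1 := ⟨d'.length, prefix_replicate hd'rep⟩
    have htm : t ≤ m := by simpa using hd'len
    rcases Nat.lt_or_ge t m with hlt | hge
    · have hsplit : replicate m (1:Fin 2) = replicate t 1 ++ replicate (m - t) 1 := by
        rw [← List.replicate_add]; congr 1; omega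
      rw [hsplit, List.append_assoc] at he'
      have he'' : M m ++ v = replicate (m - t) (1:Fin 2) ++ ([0] ++ v') :=
        List.append_cancel_left he'
      obtain ⟨c, hc⟩ : ∃ c, m - t = c + 1 := ⟨m - t - 1, by omega⟩
      rw [hc, List.replicate_succ] at he''
      have h2 : (0:Fin 2) :: (replicate m 1 ++ [0] ++ v) =
          1 :: (replicate c 1 ++ ([0] ++ v')) := by simpa [M, List.append_assoc] using he''
      exact absurd (List.cons_eq_cons.mp h2).1 (by decide)
    · have htm' : t = m := by omega
      subst htm'
      exact hu (List.IsSuffix.isInfix ⟨u' ++ [0], by rw [hd0]; simp⟩)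

lemma UU {u v u' v' : List (Fin 2)} {m : ℕ}
    (h : u ++ M m ++ v = u' ++ M m ++ v')
    (hu : ¬ replicate m 1 <:+: u) (hv : ¬ replicate m 1 <:+: v) : u' = u ∧ v' = v := by
  rcases le_or_gt u'.length u.length with hle | hlt
  · have h1 : u' = u := U1 h hle hu
    subst h1
    refine ⟨rfl, ?_⟩
    have h2 : u' ++ (M m ++ v) = u' ++ (M m ++ v') := by simpa [List.append_assoc] using h
    have h3 : M m ++ v = M m ++ v' := List.append_cancel_left h2
    exact (List.append_cancel_left h3).symm
  · have hrev : v.reverse ++ M m ++ u.reverse = v'.reverse ++ M m ++ u'.reverse := by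
      have := congrArg List.reverse h
      simpa [List.reverse_append, M_reverse, List.append_assoc] using this
    have hlen : v'.reverse.length ≤ v.reverse.length := by
      have := congrArg List.length h
      simp [M_length] at this ⊢
      omega
    have hvrev : ¬ replicate m 1 <:+: v.reverse := fun hcon =>
      hv (List.reverse_infix.mp (by rwa [List.reverse_replicate]))
    have h1 : v'.reverse = v.reverse := U1 hrev hlen hvrev
    have hv' : v' = v := by
      have := congrArg List.reverse h1; simpa using this
    refine ⟨?_, hv'⟩
    rw [hv'] at h
    have h2 : u ++ (M m ++ v) = u' ++ (M m ++ v) := by simpa [List.append_assoc] using h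
    exact (List.append_cancel_right h2).symm

lemma occM_pos {x y U V : List (Fin 2)} {m : ℕ}
    (h : x ++ [(0:Fin 2)] ++ y = U ++ M m ++ V) :
    (∃ V₀, x ++ [(0:Fin 2)] = U ++ M m ++ V₀) ∨
    (∃ U₀, U = x ++ U₀ ∧ [(0:Fin 2)] ++ y = U₀ ++ M m ++ V) := by
  have hxW : x <+: x ++ [(0:Fin 2)] ++ y := by
    refine ⟨[0] ++ y, by simp [List.append_assoc]⟩
  have hUW : U <+: x ++ [(0:Fin 2)] ++ y := ⟨M m ++ V, by simpa [List.append_assoc] using h.symm⟩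
  rcases le_or_gt x.length U.length with hx | hx
  · right
    obtain ⟨U₀, rfl⟩ := List.prefix_of_prefix_length_le hxW hUW hx
    refine ⟨U₀, rfl, ?_⟩
    have h2 : x ++ ([0] ++ y) = x ++ (U₀ ++ (M m ++ V)) := by
      simpa [List.append_assoc] using h
    simpa [List.append_assoc] using List.append_cancel_left h2
  · by_cases h2 : U.length + (M m).length ≤ x.length + 1
    · left
      have hUMW : U ++ M m <+: x ++ [(0:Fin 2)] ++ y := ⟨V, by simpa [List.append_assoc] using h.symm⟩
      have hx0W : x ++ [(0:Fin 2)] <+: x ++ [(0:Fin 2)] ++ y := ⟨y, rfl⟩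
      have hUM : U ++ M m <+: x ++ [(0:Fin 2)] :=
        List.prefix_of_prefix_length_le hUMW hx0W (by simp at h2 ⊢; omega)
      obtain ⟨V₀, hV₀⟩ := hUM
      exact ⟨V₀, by simpa [List.append_assoc] using hV₀.symm⟩
    · exfalso
      push_neg at h2
      obtain ⟨d, rfl⟩ := List.prefix_of_prefix_length_le hUW hxW (le_of_lt hx)
      have hd1 : 1 ≤ d.length := by
        rcases Nat.eq_zero_or_pos d.length with h0 | h0
        · rw [List.length_eq_zero_iff.mp h0] at hx; simp at hx
        · exact h0
      have hd2 : d.length ≤ m := by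
        have h2' := h2
        rw [M_length] at h2'
        simp only [List.length_append] at h2'
        omega
      have he : d ++ ([0] ++ y) = M m ++ V := by
        have h3 : U ++ (d ++ ([0] ++ y)) = U ++ (M m ++ V) := by
          simpa [List.append_assoc] using h
        exact List.append_cancel_left h3
      obtain ⟨d0, d', rfl⟩ : ∃ d0 d', d = d0 :: d' := by
        rcases d with _ | ⟨d0, d'⟩
        · simp at hd1
        · exact ⟨d0, d', rfl⟩
      have hcons : d0 :: (d' ++ ([0] ++ y)) = (0:Fin 2) :: (replicate m 1 ++ ([0] ++ V)) := by
        simpa [M, List.append_assoc] using he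
      have he' : d' ++ ([0] ++ y) = replicate m 1 ++ ([0] ++ V) := (List.cons_eq_cons.mp hcons).2
      have hd'len : d'.length ≤ m - 1 := by simp at hd2; omega
      have hd'rep : d' <+: replicate m (1:Fin 2) :=
        List.prefix_of_prefix_length_le ⟨[0] ++ y, he'⟩ (List.prefix_append _ _) (by simp; omega)
      obtain ⟨t, rfl⟩ : ∃ t, d' = replicate t 1 := ⟨d'.length, prefix_replicate hd'rep⟩
      have htm : t ≤ m - 1 := by simpa using hd'len
      have hm1 : 1 ≤ m := by omega
      have hsplit : replicate m (1:Fin 2) = replicate t 1 ++ replicate (m - t) 1 := by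
        rw [← List.replicate_add]; congr 1; omega
      rw [hsplit, List.append_assoc] at he'
      have he'' : [(0:Fin 2)] ++ y = replicate (m - t) (1:Fin 2) ++ ([0] ++ V) :=
        List.append_cancel_left he'
      obtain ⟨c, hc⟩ : ∃ c, m - t = c + 1 := ⟨m - t - 1, by omega⟩
      rw [hc, List.replicate_succ] at he''
      have h4 : (0:Fin 2) :: y = 1 :: (replicate c 1 ++ ([0] ++ V)) := by
        simpa using he''
      exact absurd (List.cons_eq_cons.mp h4).1 (by decide)

lemma strip0L {a : ℕ} {W' U V : List (Fin 2)} {m : ℕ} (hm : 1 ≤ m)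
    (hhead : ∃ W'', W' = (0:Fin 2) :: W'')
    (h : replicate a (0:Fin 2) ++ W' = U ++ M m ++ V) :
    ∃ U₀, U = replicate a 0 ++ U₀ ∧ W' = U₀ ++ M m ++ V := by
  have hrW : replicate a (0:Fin 2) <+: replicate a (0:Fin 2) ++ W' := List.prefix_append _ _
  have hUW : U <+: replicate a (0:Fin 2) ++ W' := ⟨M m ++ V, by simpa [List.append_assoc] using h.symm⟩
  rcases le_or_gt a U.length with ha | ha
  · obtain ⟨U₀, rfl⟩ := List.prefix_of_prefix_length_le hrW hUW (by simpa using ha)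
    refine ⟨U₀, rfl, ?_⟩
    have h2 : replicate a (0:Fin 2) ++ W' = replicate a 0 ++ (U₀ ++ (M m ++ V)) := by
      simpa [List.append_assoc] using h
    simpa [List.append_assoc] using List.append_cancel_left h2
  · exfalso
    obtain ⟨d, hd⟩ := List.prefix_of_prefix_length_le hUW hrW (by simpa using le_of_lt ha)
    obtain ⟨t, rfl⟩ : ∃ t, U = replicate t 0 := ⟨U.length, prefix_replicate ⟨d, hd⟩⟩
    have hta : t < a := by simpa using ha
    have hsplit : replicate a (0:Fin 2) = replicate t 0 ++ replicate (a - t) 0 := by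
      rw [← List.replicate_add]; congr 1; omega
    rw [hsplit, List.append_assoc] at h
    have h2 : replicate (a - t) (0:Fin 2) ++ W' = M m ++ V := by
      have h' : replicate t (0:Fin 2) ++ (replicate (a - t) 0 ++ W')
          = replicate t 0 ++ (M m ++ V) := by simpa [List.append_assoc] using h
      exact List.append_cancel_left h'
    obtain ⟨c, hc⟩ : ∃ c, a - t = c + 1 := ⟨a - t - 1, by omega⟩
    rw [hc, List.replicate_succ] at h2
    have h3 : (0:Fin 2) :: (replicate c 0 ++ W') = 0 :: (replicate m 1 ++ ([0] ++ V)) := by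
      simpa [M, List.append_assoc] using h2
    have h4 := (List.cons_eq_cons.mp h3).2
    obtain ⟨c'', hc''⟩ : ∃ c'', m = c'' + 1 := ⟨m - 1, by omega⟩
    rcases Nat.eq_zero_or_pos c with rfl | hc1
    · obtain ⟨W'', rfl⟩ := hhead
      rw [hc'', List.replicate_succ] at h4
      have h5 : (0:Fin 2) :: W'' = 1 :: (replicate c'' 1 ++ ([0] ++ V)) := by simpa using h4
      exact absurd (List.cons_eq_cons.mp h5).1 (by decide)
    · obtain ⟨c', hc'⟩ : ∃ c', c = c' + 1 := ⟨c - 1, by omega⟩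
      rw [hc', hc'', List.replicate_succ, List.replicate_succ] at h4
      have h5 : (0:Fin 2) :: (replicate c' 0 ++ W') = 1 :: (replicate c'' 1 ++ ([0] ++ V)) := by
        simpa using h4
      exact absurd (List.cons_eq_cons.mp h5).1 (by decide)

lemma strip1R {b : ℕ} {W U V : List (Fin 2)} {m : ℕ}
    (h : W ++ replicate b (1:Fin 2) = U ++ M m ++ V) :
    ∃ V₀, W = U ++ M m ++ V₀ ∧ V = V₀ ++ replicate b 1 := by
  have hUMW : U ++ M m <+: W ++ replicate b 1 := ⟨V, by simpa [List.append_assoc] using h.symm⟩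
  have hWW : W <+: W ++ replicate b 1 := List.prefix_append _ _
  rcases le_or_gt (U.length + (M m).length) W.length with hle | hlt
  · have hUM : U ++ M m <+: W :=
      List.prefix_of_prefix_length_le hUMW hWW (by simpa using hle)
    obtain ⟨V₀, hV₀⟩ := hUM
    refine ⟨V₀, by simpa [List.append_assoc] using hV₀.symm, ?_⟩
    have h2 : (U ++ M m) ++ (V₀ ++ replicate b 1) = (U ++ M m) ++ V := by
      rw [← List.append_assoc, hV₀]
      simpa [List.append_assoc] using h
    exact (List.append_cancel_left h2).symm
  · exfalso
    obtain ⟨e, he⟩ := List.prefix_of_prefix_length_le hWW hUMW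
      (by rw [List.length_append]; exact le_of_lt hlt)
    -- he : W ++ e = U ++ M m
    have heb : e <+: replicate b (1:Fin 2) := by
      refine ⟨V, ?_⟩
      have h2 : W ++ (e ++ V) = W ++ replicate b 1 := by
        rw [← List.append_assoc, he]
        simpa [List.append_assoc] using h.symm
      exact List.append_cancel_left h2
    obtain ⟨t, rfl⟩ : ∃ t, e = replicate t 1 := ⟨e.length, prefix_replicate heb⟩
    rw [M_length] at hlt
    rcases Nat.eq_zero_or_pos t with rfl | ht
    · have := congrArg List.length he
      simp [M_length] at this; omega
    · -- reverse: last char of U ++ M m is 0, but last of W ++ 1^t is 1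
      have hrev := congrArg List.reverse he
      rw [List.reverse_append, List.reverse_append, List.reverse_replicate, M_reverse] at hrev
      obtain ⟨c, hc⟩ : ∃ c, t = c + 1 := ⟨t - 1, by omega⟩
      rw [hc, List.replicate_succ] at hrev
      have h4 : (1:Fin 2) :: (replicate c 1 ++ W.reverse) = 0 :: (replicate m 1 ++ [0] ++ U.reverse) := by
        simpa [M, List.append_assoc] using hrev
      exact absurd (List.cons_eq_cons.mp h4).1 (by decide)

lemma M_not_in_M_succ {m : ℕ} {U₀ V₀ : List (Fin 2)}
    (h : M (m+1) = U₀ ++ M m ++ V₀) : False := by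
  have hlen := congrArg List.length h
  simp only [M_length, List.length_append] at hlen
  rcases U₀ with _ | ⟨u0, U₁⟩
  · have h2 : (0:Fin 2) :: (replicate (m+1) 1 ++ [0]) = 0 :: (replicate m 1 ++ ([0] ++ V₀)) := by
      simpa [M, List.append_assoc] using h
    have h3 := (List.cons_eq_cons.mp h2).2
    rw [List.replicate_succ', List.append_assoc] at h3
    have h4 : [(1:Fin 2)] ++ [0] = [0] ++ V₀ := List.append_cancel_left h3
    have h5 : (1:Fin 2) :: [0] = 0 :: V₀ := by simpa using h4
    exact absurd (List.cons_eq_cons.mp h5).1 (by decide)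
  · have h6 : U₁.length = 0 ∧ V₀.length = 0 := by
      simp only [List.length_cons] at hlen; omega
    obtain ⟨rfl, rfl⟩ : U₁ = [] ∧ V₀ = [] :=
      ⟨List.length_eq_zero_iff.mp h6.1, List.length_eq_zero_iff.mp h6.2⟩
    have h2 : (0:Fin 2) :: (replicate (m+1) 1 ++ [0]) = u0 :: (M m ++ []) := by
      simpa [M, List.append_assoc] using h
    have h3 := (List.cons_eq_cons.mp h2).2
    rw [List.replicate_succ] at h3
    have h4 : (1:Fin 2) :: (replicate m 1 ++ [0]) = 0 :: (replicate m 1 ++ [0] ++ []) := by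
      simpa [M, List.append_assoc] using h3
    exact absurd (List.cons_eq_cons.mp h4).1 (by decide)

def Lx : ℕ → List (Fin 2)
  | 0 => []
  | 1 => []
  | (m+2) => g (m+1) ++ [0]

def D : ℕ → List (Fin 2)
  | 0 => []
  | 1 => []
  | (m+2) => [0] ++ g (m+1)

lemma Gsplit : ∀ m, [(0:Fin 2)] ++ g m ++ [0] = D m ++ M m ++ Lx m
  | 0 => by simp [g, D, Lx, M]
  | 1 => by simp [g, D, Lx, M]
  | (m+2) => by
    show [(0:Fin 2)] ++ g (m+2) ++ [0] = ([0] ++ g (m+1)) ++ M (m+2) ++ (g (m+1) ++ [0])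
    simp [g, M, List.append_assoc]

lemma ones_not_infix_g {a m : ℕ} (ham : m < a) : ¬ replicate a (1:Fin 2) <:+: g m :=
  fun h => runlem m ((ones_infix_mono (by omega)).trans h)

lemma ones_not_infix_D {m : ℕ} (hm : 1 ≤ m) : ¬ replicate m (1:Fin 2) <:+: D m := by
  match m with
  | 1 =>
    intro h
    have := List.eq_nil_of_infix_nil h
    simp at this
  | (t+2) =>
    intro h
    have h2 : replicate (t+2) (1:Fin 2) <:+: [] ++ (0:Fin 2) :: g (t+1) := by
      simpa [D] using h
    rcases ones_split h2 with h3 | h3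
    · have := List.eq_nil_of_infix_nil h3; simp at this
    · exact ones_not_infix_g (by omega) h3

lemma ones_not_infix_Lx {m : ℕ} (hm : 1 ≤ m) : ¬ replicate m (1:Fin 2) <:+: Lx m := by
  match m with
  | 1 =>
    intro h
    have := List.eq_nil_of_infix_nil h
    simp at this
  | (t+2) =>
    intro h
    have h2 : replicate (t+2) (1:Fin 2) <:+: g (t+1) ++ (0:Fin 2) :: [] := by
      simpa [Lx] using h
    rcases ones_split h2 with h3 | h3
    · exact ones_not_infix_g (by omega) h3
    · have := List.eq_nil_of_infix_nil h3; simp at this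

lemma charn {m : ℕ} (hm : 1 ≤ m) {U V : List (Fin 2)}
    (h : [(0:Fin 2)] ++ g m ++ [0] = U ++ M m ++ V) : U = D m ∧ V = Lx m := by
  rw [Gsplit m] at h
  exact UU h (ones_not_infix_D hm) (ones_not_infix_Lx hm)

lemma g_succ_expand (t : ℕ) :
    g (t+2) = g (t+1) ++ [0] ++ replicate (t+2) 1 ++ [0] ++ g (t+1) := rfl

lemma charn1 {m : ℕ} (hm : 1 ≤ m) {U V : List (Fin 2)}
    (h : [(0:Fin 2)] ++ g (m+1) ++ [0] = U ++ M m ++ V) :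
    (U = D m ∧ V = Lx m ++ replicate (m+1) 1 ++ [0] ++ g m ++ [0]) ∨
    (U = [0] ++ g m ++ [0] ++ replicate (m+1) 1 ++ D m ∧ V = Lx m) := by
  obtain ⟨t, rfl⟩ : ∃ t, m = t + 1 := ⟨m - 1, by omega⟩
  have hshape : ([0] ++ g (t+1)) ++ [(0:Fin 2)] ++
      (replicate (t+2) 1 ++ ([0] ++ (g (t+1) ++ [0]))) = U ++ M (t+1) ++ V := by
    rw [← h, g_succ_expand]
    simp [List.append_assoc]
  rcases occM_pos hshape with ⟨V₀, hV₀⟩ | ⟨U₀, hU₀, h₂⟩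
  · left
    have hV₀' : [(0:Fin 2)] ++ g (t+1) ++ [0] = U ++ M (t+1) ++ V₀ := by
      rw [← hV₀]
    obtain ⟨hU, hV₀eq⟩ := charn (by omega) hV₀'
    refine ⟨hU, ?_⟩
    have hE : [(0:Fin 2)] ++ g (t+2) ++ [0] = D (t+1) ++ M (t+1) ++
        (Lx (t+1) ++ replicate (t+2) 1 ++ [0] ++ g (t+1) ++ [0]) := by
      calc [(0:Fin 2)] ++ g (t+2) ++ [0]
          = ([(0:Fin 2)] ++ g (t+1) ++ [0]) ++ (replicate (t+2) 1 ++ [0] ++ g (t+1) ++ [0]) := by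
            rw [g_succ_expand]; simp [List.append_assoc]
        _ = (D (t+1) ++ M (t+1) ++ Lx (t+1)) ++ (replicate (t+2) 1 ++ [0] ++ g (t+1) ++ [0]) := by
            rw [Gsplit]
        _ = D (t+1) ++ M (t+1) ++
            (Lx (t+1) ++ replicate (t+2) 1 ++ [0] ++ g (t+1) ++ [0]) := by
            simp [List.append_assoc]
    rw [hU] at h
    have h2 : D (t+1) ++ (M (t+1) ++ V) = D (t+1) ++ (M (t+1) ++
        (Lx (t+1) ++ replicate (t+2) 1 ++ [0] ++ g (t+1) ++ [0])) := by
      have := h.symm.trans hE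
      simpa [List.append_assoc] using this
    have h3 := List.append_cancel_left h2
    have h4 := List.append_cancel_left h3
    rw [h4]
  · right
    have h₂' : ([0] ++ replicate (t+2) 1) ++ [(0:Fin 2)] ++ (g (t+1) ++ [0]) =
        U₀ ++ M (t+1) ++ V := by
      rw [← h₂]; simp [List.append_assoc]
    rcases occM_pos h₂' with ⟨V₀, hV₀⟩ | ⟨U₁, hU₁, h₃⟩
    · exfalso
      apply M_not_in_M_succ (m := t+1) (U₀ := U₀) (V₀ := V₀)
      rw [← hV₀]; simp [M, List.append_assoc]
    · have h₃' : [(0:Fin 2)] ++ g (t+1) ++ [0] = U₁ ++ M (t+1) ++ V := by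
        rw [← h₃]; simp [List.append_assoc]
      obtain ⟨hU₁eq, hVeq⟩ := charn (by omega) h₃'
      subst hU₁eq hVeq
      refine ⟨?_, rfl⟩
      rw [hU₀, hU₁]
      simp [List.append_assoc]


-- placeholders for already-proven lemmas (merged later)


lemma pal_g : ∀ n, (g n).reverse = g n
  | 0 => rfl
  | 1 => rfl
  | (n+2) => by
    show (g (n+1) ++ [0] ++ List.replicate (n+2) 1 ++ [0] ++ g (n+1)).reverse
        = g (n+1) ++ [0] ++ List.replicate (n+2) 1 ++ [0] ++ g (n+1)
    simp [List.reverse_append, pal_g (n+1), List.append_assoc]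

lemma one_mem_rep0 {i : ℕ} (h : (1:Fin 2) ∈ replicate i (0:Fin 2)) : False :=
  absurd (List.eq_of_mem_replicate h) (by decide)

lemma no_ones_eq_rep0 {u : List (Fin 2)} {j a : ℕ} (hj : 1 ≤ j)
    (h : u ++ replicate j (1:Fin 2) = replicate a (0:Fin 2)) : False := by
  have h1 : (1:Fin 2) ∈ replicate a (0:Fin 2) := by
    rw [← h]
    exact List.mem_append_right _ (by rw [List.mem_replicate]; exact ⟨by omega, rfl⟩)
  exact one_mem_rep0 h1

lemma rich_ext' {w : List (Fin 2)} {a : Fin 2} {w' : List (Fin 2)} (hw : Rich w)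
    (s : List (Fin 2)) (hpal : s.reverse = s) (heq : w' = w ++ [a])
    (hsuf : s <:+ w') (hnot : ¬ s <:+: w) : Rich w' := by
  rw [heq]
  exact rich_ext hw s hpal (heq ▸ hsuf).isInfix hnot

lemma rich_rep0 (k : ℕ) : Rich (replicate k (0:Fin 2)) := by
  induction k with
  | zero => simpa using (rich_nil : Rich ([] : List (Fin 2)))
  | succ k ih =>
    refine rich_ext' ih (replicate (k+1) 0) (by simp) List.replicate_succ'
      (List.suffix_refl _) ?_
    intro hcon
    have := hcon.length_le
    simp at this

lemma infix_rep0_elim {s z : List (Fin 2)} {a : ℕ} (h : s <:+: replicate a 0 ++ z) :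
    s <:+: z ∨ (∃ i s₂, 1 ≤ i ∧ s = replicate i 0 ++ s₂ ∧ s₂ <+: z) ∨
    (∃ i, s = replicate i (0:Fin 2)) := by
  rcases infix_split h with h1 | h1 | ⟨s₁, s₂, hs, hs₁, hs₂, hsx, hsy⟩
  · right; right
    exact ⟨s.length, List.eq_replicate_of_mem fun x hx => List.eq_of_mem_replicate (h1.subset hx)⟩
  · left; exact h1
  · right; left
    have hs₁rep : s₁ = replicate s₁.length 0 :=
      List.eq_replicate_of_mem fun x hx => List.eq_of_mem_replicate (hsx.isInfix.subset hx)
    refine ⟨s₁.length, s₂, ?_, by rw [hs]; exact congrArg (fun l => l ++ s₂) hs₁rep, hsy⟩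
    rcases s₁ with _ | _
    · exact absurd rfl hs₁
    · simp

lemma head1_strip {r z : List (Fin 2)} {a : ℕ}
    (h : (1:Fin 2) :: r <:+: replicate a 0 ++ z) : (1:Fin 2) :: r <:+: z := by
  rcases infix_rep0_elim h with h1 | ⟨i, s₂, hi, heq, hp⟩ | ⟨i, heq⟩
  · exact h1
  · exfalso
    obtain ⟨i', rfl⟩ : ∃ i', i = i' + 1 := ⟨i - 1, by omega⟩
    rw [List.replicate_succ] at heq
    simp only [List.cons_append] at heq
    exact absurd (List.cons_eq_cons.mp heq).1 (by decide)
  · exfalso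
    have h1 : (1:Fin 2) ∈ replicate i (0:Fin 2) := by
      rw [← heq]; exact List.mem_cons_self
    exact one_mem_rep0 h1

lemma head01_strip {r z : List (Fin 2)} {a : ℕ}
    (h : (0:Fin 2) :: 1 :: r <:+: replicate a 0 ++ z) :
    (0:Fin 2) :: 1 :: r <:+: (0:Fin 2) :: z := by
  rcases infix_rep0_elim h with h1 | ⟨i, s₂, hi, heq, hp⟩ | ⟨i, heq⟩
  · exact h1.trans (List.suffix_cons 0 z).isInfix
  · rcases i with _ | _ | i
    · omega
    · -- i = 1
      have heq' : (0:Fin 2) :: 1 :: r = 0 :: s₂ := by simpa using heq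
      have hs₂ : s₂ = 1 :: r := ((List.cons_eq_cons.mp heq').2).symm
      obtain ⟨t, ht⟩ := hp
      refine ⟨[], t, ?_⟩
      rw [← ht, ← hs₂]
      simp
    · exfalso
      rw [List.replicate_succ, List.replicate_succ] at heq
      simp only [List.cons_append] at heq
      have h2 := (List.cons_eq_cons.mp heq).2
      exact absurd (List.cons_eq_cons.mp h2).1 (by decide)
  · exfalso
    have h1 : (1:Fin 2) ∈ replicate i (0:Fin 2) := by
      rw [← heq]; exact List.mem_cons_of_mem _ List.mem_cons_self
    exact one_mem_rep0 h1

lemma g2_eq : g 2 = [1,0,1,1,0,1] := by decide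

lemma rich_base {k : ℕ} (hk : 1 ≤ k) : Rich (replicate k (0:Fin 2) ++ g 2) := by
  obtain ⟨c, rfl⟩ : ∃ c, k = c + 1 := ⟨k - 1, by omega⟩
  have h0 : Rich (replicate (c+1) (0:Fin 2)) := rich_rep0 _
  have h1 : Rich (replicate (c+1) (0:Fin 2) ++ [1]) := by
    refine rich_ext' h0 [1] (by decide) rfl (List.suffix_append _ _) ?_
    intro hcon
    exact one_mem_rep0 (hcon.subset List.mem_cons_self)
  have h2 : Rich (replicate (c+1) (0:Fin 2) ++ [1,0]) := by
    refine rich_ext' (a := 0) h1 [0,1,0] (by decide) (by simp) ?_ ?_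
    · refine ⟨replicate c 0, ?_⟩
      rw [List.replicate_succ']
      simp
    · intro hcon
      have := (head01_strip hcon).length_le
      simp at this
  have h3 : Rich (replicate (c+1) (0:Fin 2) ++ [1,0,1]) := by
    refine rich_ext' (a := 1) h2 [1,0,1] (by decide) (by simp) (List.suffix_append _ _) ?_
    intro hcon
    have := (head1_strip hcon).length_le
    simp at this
  have h4 : Rich (replicate (c+1) (0:Fin 2) ++ [1,0,1,1]) := by
    refine rich_ext' (a := 1) h3 [1,1] (by decide) (by simp) ⟨replicate (c+1) 0 ++ [1,0], by simp⟩ ?_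
    intro hcon
    exact absurd (head1_strip hcon) (by decide)
  have h5 : Rich (replicate (c+1) (0:Fin 2) ++ [1,0,1,1,0]) := by
    refine rich_ext' (a := 0) h4 [0,1,1,0] (by decide) (by simp)
      ⟨replicate (c+1) 0 ++ [1], by simp⟩ ?_
    intro hcon
    exact absurd (head01_strip hcon) (by decide)
  have h6 : Rich (replicate (c+1) (0:Fin 2) ++ [1,0,1,1,0,1]) := by
    refine rich_ext' (a := 1) h5 [1,0,1,1,0,1] (by decide) (by simp) (List.suffix_append _ _) ?_
    intro hcon
    have := (head1_strip hcon).length_le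
    simp at this
  rw [g2_eq]
  exact h6

lemma rep3_succ (t : ℕ) : replicate (t+3) (1:Fin 2) = replicate (t+2) 1 ++ [1] := by
  rw [show t + 3 = (t+2)+1 by omega, List.replicate_succ']

lemma ones_in_cons0 {a : ℕ} {x : List (Fin 2)} (ha : 1 ≤ a)
    (h : replicate a (1:Fin 2) <:+: (0:Fin 2) :: x) : replicate a 1 <:+: x := by
  have h' : replicate a (1:Fin 2) <:+: ([] : List (Fin 2)) ++ (0:Fin 2) :: x := by simpa using h
  rcases ones_split h' with h1 | h1
  · have := List.eq_nil_of_infix_nil h1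
    have := congrArg List.length this
    simp at this; omega
  · exact h1

lemma F1 {c m : ℕ} (hm : 1 ≤ m) {u v : List (Fin 2)}
    (heq : u ++ ([(0:Fin 2)] ++ g m ++ [0]) ++ v = replicate (c+1) (0:Fin 2) ++ g m) : False := by
  have h1 : replicate c (0:Fin 2) ++ ([(0:Fin 2)] ++ g m) =
      (u ++ D m) ++ M m ++ (Lx m ++ v) := by
    have e1 : (u ++ D m) ++ M m ++ (Lx m ++ v) = u ++ (D m ++ M m ++ Lx m) ++ v := by
      simp [List.append_assoc]
    rw [e1, ← Gsplit m, heq, List.replicate_succ']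
    simp [List.append_assoc]
  obtain ⟨U₀, hU₀, h2⟩ := strip0L hm ⟨g m, rfl⟩ h1
  have h3 : [(0:Fin 2)] ++ g m ++ [0] = U₀ ++ M m ++ (Lx m ++ v ++ [0]) := by
    have e2 := congrArg (fun l => l ++ [(0:Fin 2)]) h2
    simp only [List.append_assoc] at e2 ⊢
    exact e2
  obtain ⟨-, hV⟩ := charn hm h3
  have := congrArg List.length hV
  simp at this

lemma F2 {c m j : ℕ} (hm : 1 ≤ m) (hj : 1 ≤ j) {u v : List (Fin 2)}
    (heq : u ++ (replicate j 1 ++ ([(0:Fin 2)] ++ g m ++ [0]) ++ replicate j 1) ++ v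
      = replicate (c+1) (0:Fin 2) ++ g (m+1) ++ [0] ++ replicate (j-1) 1) : False := by
  have h1 : replicate c (0:Fin 2) ++ (([(0:Fin 2)] ++ (g (m+1) ++ ([0] ++ replicate (j-1) 1))))
      = (u ++ (replicate j 1 ++ D m)) ++ M m ++ (Lx m ++ (replicate j 1 ++ v)) := by
    have e1 : (u ++ (replicate j 1 ++ D m)) ++ M m ++ (Lx m ++ (replicate j 1 ++ v))
        = u ++ (replicate j 1 ++ (D m ++ M m ++ Lx m) ++ replicate j 1) ++ v := by
      simp [List.append_assoc]
    rw [e1, ← Gsplit m, heq, List.replicate_succ']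
    simp [List.append_assoc]
  obtain ⟨U₀, hU₀, h2⟩ := strip0L hm ⟨g (m+1) ++ ([0] ++ replicate (j-1) 1), rfl⟩ h1
  have h2' : ([(0:Fin 2)] ++ g (m+1) ++ [0]) ++ replicate (j-1) 1
      = U₀ ++ M m ++ (Lx m ++ (replicate j 1 ++ v)) := by
    rw [← h2]; simp [List.append_assoc]
  obtain ⟨V₀, h3, hV⟩ := strip1R h2'
  rcases charn1 hm h3 with ⟨hU, hV₀⟩ | ⟨hU, hV₀⟩
  · rw [hU] at hU₀
    have h4 : (u ++ replicate j 1) ++ D m = replicate c 0 ++ D m := by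
      rw [← hU₀]; simp [List.append_assoc]
    exact no_ones_eq_rep0 hj (List.append_cancel_right h4)
  · rw [hV₀] at hV
    have h5 : Lx m ++ (replicate j 1 ++ v) = Lx m ++ replicate (j-1) 1 := by
      rw [hV]
    have h6 := List.append_cancel_left h5
    have := congrArg List.length h6
    simp at this
    omega

lemma F5 {c t : ℕ} {q' u v : List (Fin 2)} {b : Fin 2} (hq' : q' <+: g (t+2))
    (heq : u ++ ((q' ++ [b]).reverse ++ ([(0:Fin 2)] ++ replicate (t+3) 1 ++ [0]) ++ (q' ++ [b])) ++ v
      = ((((replicate (c+1) (0:Fin 2) ++ g (t+2)) ++ [0]) ++ replicate (t+3) 1) ++ [0]) ++ q') :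
    False := by
  have h1 : replicate c (0:Fin 2) ++
      ([(0:Fin 2)] ++ (g (t+2) ++ ([0] ++ (replicate (t+3) 1 ++ ([0] ++ q')))))
      = (u ++ (q' ++ [b]).reverse) ++ M (t+3) ++ ((q' ++ [b]) ++ v) := by
    have e1 : (u ++ (q' ++ [b]).reverse) ++ M (t+3) ++ ((q' ++ [b]) ++ v)
        = u ++ ((q' ++ [b]).reverse ++ ([(0:Fin 2)] ++ replicate (t+3) 1 ++ [0]) ++ (q' ++ [b])) ++ v := by
      simp [M, List.append_assoc]
    rw [e1, heq, show replicate (c+1) (0:Fin 2) = replicate c 0 ++ [0] from List.replicate_succ']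
    simp [List.append_assoc]
  obtain ⟨U₀, hU₀, h2⟩ := strip0L (by omega) ⟨_, rfl⟩ h1
  have h3 : ((([(0:Fin 2)] ++ g (t+2)) ++ [0]) ++ replicate (t+3) 1) ++ [(0:Fin 2)] ++ q'
      = U₀ ++ M (t+3) ++ ((q' ++ [b]) ++ v) := by
    rw [← h2]; simp [List.append_assoc]
  have hones : ¬ replicate (t+3) (1:Fin 2) <:+: [(0:Fin 2)] ++ g (t+2) := by
    intro hc
    exact ones_not_infix_g (by omega) (ones_in_cons0 (by omega) hc)
  rcases occM_pos h3 with ⟨V₀, hV₀⟩ | ⟨U₁, hU₁, h4⟩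
  · have hU4 : ([(0:Fin 2)] ++ g (t+2)) ++ M (t+3) ++ ([] : List (Fin 2))
        = U₀ ++ M (t+3) ++ V₀ := by
      rw [← hV₀]; simp [M, List.append_assoc]
    obtain ⟨hU₀eq, -⟩ := UU hU4 hones (by
      intro hc
      have := List.eq_nil_of_infix_nil hc
      have := congrArg List.length this
      simp at this)
    rw [hU₀eq] at h3
    have hid : ((([(0:Fin 2)] ++ g (t+2)) ++ [0]) ++ replicate (t+3) 1) ++ [(0:Fin 2)] ++ q'
        = ([(0:Fin 2)] ++ g (t+2)) ++ M (t+3) ++ q' := by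
      simp [M, List.append_assoc]
    have h5 := hid.symm.trans h3
    have h5' : ([(0:Fin 2)] ++ g (t+2)) ++ (M (t+3) ++ q')
        = ([(0:Fin 2)] ++ g (t+2)) ++ (M (t+3) ++ ((q' ++ [b]) ++ v)) := by
      simpa [List.append_assoc] using h5
    have h6 := List.append_cancel_left (List.append_cancel_left h5')
    have := congrArg List.length h6
    simp at this
  · have hM : M (t+3) <:+: [(0:Fin 2)] ++ q' := ⟨U₁, (q' ++ [b]) ++ v, by rw [← h4]⟩
    have h7 : replicate (t+3) (1:Fin 2) <:+: (0:Fin 2) :: q' := by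
      have := (ones_infix_M (t+3)).trans hM
      simpa using this
    have h8 := ones_in_cons0 (by omega) h7
    exact ones_not_infix_g (by omega) (h8.trans hq'.isInfix)

lemma step {t c : ℕ} (IH : Rich (replicate (c+1) (0:Fin 2) ++ g (t+2))) :
    Rich (replicate (c+1) (0:Fin 2) ++ g (t+3)) := by
  have hA : Rich ((replicate (c+1) (0:Fin 2) ++ g (t+2)) ++ [0]) := by
    refine rich_ext IH ([(0:Fin 2)] ++ g (t+2) ++ [0])
      (by simp [List.reverse_append, pal_g]) ?_ ?_
    · refine List.IsSuffix.isInfix ⟨replicate c 0, ?_⟩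
      rw [show replicate (c+1) (0:Fin 2) = replicate c 0 ++ [0] from List.replicate_succ']
      simp [List.append_assoc]
    · intro hcon
      obtain ⟨u, v, huv⟩ := hcon
      exact F1 (by omega) huv
  have hB : ∀ j, j ≤ t + 2 →
      Rich (((replicate (c+1) (0:Fin 2) ++ g (t+2)) ++ [0]) ++ replicate j 1) := by
    intro j
    induction j with
    | zero => intro _; simpa using hA
    | succ j ihj =>
      intro hj
      have hprev := ihj (by omega)
      refine rich_ext' (a := 1) hprev
        (replicate (j+1) 1 ++ ([(0:Fin 2)] ++ g (t+1) ++ [0]) ++ replicate (j+1) 1)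
        (by simp [List.reverse_append, pal_g, List.append_assoc])
        (by rw [show replicate (j+1) (1:Fin 2) = replicate j 1 ++ [1] from List.replicate_succ']; simp [List.append_assoc]) ?_ ?_
      · refine ⟨replicate (c+1) 0 ++ g (t+1) ++ [0] ++ replicate (t+1-j) 1, ?_⟩
        have hsplit : replicate (t+2) (1:Fin 2) = replicate (t+1-j) 1 ++ replicate (j+1) 1 := by
          rw [← List.replicate_add]; congr 1; omega
        rw [g_succ_expand t, hsplit]
        simp only [List.append_assoc, List.singleton_append, List.cons_append,
          List.nil_append, List.append_nil]
      · intro hcon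
        obtain ⟨u, v, huv⟩ := hcon
        exact F2 (m := t+1) (j := j+1) (by omega) (by omega) huv
  have hBtop : Rich ((((replicate (c+1) (0:Fin 2) ++ g (t+2)) ++ [0]) ++ replicate (t+2) 1)
      ++ [1]) := by
    refine rich_ext (hB (t+2) le_rfl) (replicate (t+3) 1) (by simp) ?_ ?_
    · refine List.IsSuffix.isInfix ⟨((replicate (c+1) (0:Fin 2) ++ g (t+2)) ++ [0]), ?_⟩
      rw [rep3_succ t]
      simp [List.append_assoc]
    · intro hcon
      have hcon' : replicate (t+3) (1:Fin 2) <:+: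
          (replicate (c+1) (0:Fin 2) ++ g (t+2)) ++ ((0:Fin 2) :: replicate (t+2) 1) := by
        simpa [List.append_assoc] using hcon
      rcases ones_split hcon' with h1 | h1
      · have h2 : replicate (t+3) (1:Fin 2) <:+: g (t+2) := by
          have h3 : (1:Fin 2) :: replicate (t+2) 1 <:+: replicate (c+1) 0 ++ g (t+2) := by
            rw [← List.replicate_succ]; exact h1
          have := head1_strip h3
          rwa [← List.replicate_succ] at this
        exact ones_not_infix_g (by omega) h2
      · have := ones_le_of_infix_ones h1
        omega
  have hC : Rich (((((replicate (c+1) (0:Fin 2) ++ g (t+2)) ++ [0]) ++ replicate (t+2) 1)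
      ++ [1]) ++ [0]) := by
    refine rich_ext hBtop ([(0:Fin 2)] ++ replicate (t+3) 1 ++ [0]) (by simp) ?_ ?_
    · refine List.IsSuffix.isInfix ⟨replicate (c+1) (0:Fin 2) ++ g (t+2), ?_⟩
      rw [rep3_succ t]
      simp [List.append_assoc]
    · intro hcon
      obtain ⟨u, v, huv⟩ := hcon
      have huv' : (((replicate (c+1) (0:Fin 2) ++ g (t+2)) ++ [0])) ++ replicate (t+3) 1
          = u ++ M (t+3) ++ v := by
        show replicate (c+1) (0:Fin 2) ++ g (t+2) ++ [0] ++ replicate (t+3) 1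
            = u ++ ([(0:Fin 2)] ++ replicate (t+3) 1 ++ [0]) ++ v
        conv_lhs => rw [rep3_succ t, ← List.append_assoc]
        exact huv.symm
      obtain ⟨V₀, h2, -⟩ := strip1R huv'
      have h3 : replicate (t+3) (1:Fin 2) <:+: ((replicate (c+1) (0:Fin 2) ++ g (t+2)) ++ [0]) :=
        (ones_infix_M (t+3)).trans ⟨u, V₀, h2.symm⟩
      have h4 : replicate (t+3) (1:Fin 2) <:+:
          (replicate (c+1) (0:Fin 2) ++ g (t+2)) ++ ((0:Fin 2) :: []) := by
        simpa using h3
      rcases ones_split h4 with h5 | h5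
      · have h6 : (1:Fin 2) :: replicate (t+2) 1 <:+: replicate (c+1) 0 ++ g (t+2) := by
          rw [← List.replicate_succ]; exact h5
        have h7 := head1_strip h6
        rw [← List.replicate_succ] at h7
        exact ones_not_infix_g (by omega) h7
      · have := List.eq_nil_of_infix_nil h5
        have := congrArg List.length this
        simp at this
  have base_eq : ((((replicate (c+1) (0:Fin 2) ++ g (t+2)) ++ [0]) ++ replicate (t+2) 1)
      ++ [1]) ++ [0] = (((replicate (c+1) (0:Fin 2) ++ g (t+2)) ++ [0]) ++ replicate (t+3) 1)
      ++ [0] := by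
    rw [rep3_succ t]
    simp [List.append_assoc]
  rw [base_eq] at hC
  have hD : ∀ q, q <+: g (t+2) →
      Rich (((((replicate (c+1) (0:Fin 2) ++ g (t+2)) ++ [0]) ++ replicate (t+3) 1) ++ [0]) ++ q) := by
    intro q
    induction q using List.reverseRecOn with
    | nil => intro _; simpa using hC
    | append_singleton q' b ihq =>
      intro hq
      have hq' : q' <+: g (t+2) := (List.prefix_append q' [b]).trans hq
      have hprev := ihq hq'
      refine rich_ext' (a := b) hprev
        ((q' ++ [b]).reverse ++ ([(0:Fin 2)] ++ replicate (t+3) 1 ++ [0]) ++ (q' ++ [b]))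
        (by simp [List.reverse_append, List.append_assoc])
        (by simp [List.append_assoc]) ?_ ?_
      · obtain ⟨w', hw'⟩ := hq
        have hg : w'.reverse ++ (q' ++ [b]).reverse = g (t+2) := by
          have h0 := congrArg List.reverse hw'
          rw [List.reverse_append, pal_g] at h0
          exact h0
        refine ⟨replicate (c+1) 0 ++ w'.reverse, ?_⟩
        conv_rhs => rw [← hg]
        simp [List.append_assoc]
      · intro hcon
        obtain ⟨u, v, huv⟩ := hcon
        exact F5 hq' huv
  have hfin := hD (g (t+2)) (List.prefix_refl _)
  have hshape : ((((replicate (c+1) (0:Fin 2) ++ g (t+2)) ++ [0]) ++ replicate (t+3) 1) ++ [0])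
      ++ g (t+2) = replicate (c+1) (0:Fin 2) ++ g (t+3) := by
    rw [g_succ_expand (t+1)]
    simp [List.append_assoc]
  rwa [hshape] at hfin

end RP

theorem stmt16 (n k : ℕ) (hn : 2 ≤ n) (hk : 2 ≤ k) :
    Rich (List.replicate k (0 : Fin 2) ++ g n) := by
  obtain ⟨c, rfl⟩ : ∃ c, k = c + 1 := ⟨k - 1, by omega⟩
  induction n, hn using Nat.le_induction with
  | base => exact RP.rich_base (by omega)
  | succ n hn ih =>
    obtain ⟨t, rfl⟩ : ∃ t, n = t + 2 := ⟨n - 2, by omega⟩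
    exact RP.step ih
end

section
/- Define g_1 = 1 and g_n = g_{n-1}·0·1^n·0·g_{n-1} over {0,1}, and let F(w) denote the set of flexed points of w. Then for n, k ≥ 2, the flexed points of 0^k·g_n that are not flexed points of 0^k·g_{n-1} are exactly 0^k·g_{n-1}·0·1 and 0^k·g_{n-1}·0·1^n. -/
namespace St17
open List

abbrev F2 := Fin 2
def R (j : ℕ) : List F2 := List.replicate j 1
def Z (j : ℕ) : List F2 := List.replicate j 0

@[simp] lemma length_R (j) : (R j).length = j := List.length_replicate ..
@[simp] lemma length_Z (j) : (Z j).length = j := List.length_replicate ..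
@[simp] lemma reverse_R (j) : (R j).reverse = R j := List.reverse_replicate ..
@[simp] lemma reverse_Z (j) : (Z j).reverse = Z j := List.reverse_replicate ..
lemma R_add (a b) : R (a + b) = R a ++ R b := List.replicate_add ..
lemma Z_add (a b) : Z (a + b) = Z a ++ Z b := List.replicate_add ..
lemma R_succ (a) : R (a + 1) = 1 :: R a := rfl
lemma Z_succ (a) : Z (a + 1) = 0 :: Z a := rfl
lemma mem_R {x : F2} {j} (h : x ∈ R j) : x = 1 := ((List.mem_replicate).1 h).2
lemma one_ne_zero' : (1 : F2) ≠ 0 := by decide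

-- suffix uniqueness by length
lemma suffix_eq_suffix {q q' p : List F2} (h : q <:+ p) (h' : q' <:+ p)
    (hl : q.length = q'.length) : q = q' := by
  obtain ⟨s, rfl⟩ := h
  obtain ⟨s', e⟩ := h'
  have hs : s'.length = s.length := by
    have := congrArg List.length e
    simp at this; omega
  exact List.append_inj_right e.symm (by omega)

lemma prefix_eq_prefix {q q' p : List F2} (h : q <+: p) (h' : q' <+: p)
    (hl : q.length = q'.length) : q = q' :=
  (List.prefix_of_prefix_length_le h h' (le_of_eq hl)).eq_of_length hl
-- chunk B (appended after chunk A for testing)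
-- split lemmas
lemma suffix_split {t a b : List F2} (h : t <:+ a ++ b) (hl : b.length ≤ t.length) :
    ∃ e, e <:+ a ∧ t = e ++ b := by
  have hb : b <:+ t := List.suffix_of_suffix_length_le (List.suffix_append a b) h hl
  obtain ⟨e, rfl⟩ := hb
  refine ⟨e, ?_, rfl⟩
  obtain ⟨s, hs⟩ := h
  have : (s ++ e) ++ b = a ++ b := by simpa [List.append_assoc] using hs
  exact ⟨s, List.append_cancel_right this⟩

lemma suffix_small {t a b : List F2} (h : t <:+ a ++ b) (hl : t.length ≤ b.length) :
    t <:+ b :=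
  List.suffix_of_suffix_length_le h (List.suffix_append a b) hl

lemma prefix_split {v a b : List F2} (h : v <+: a ++ b) (hl : a.length ≤ v.length) :
    ∃ s, s <+: b ∧ v = a ++ s := by
  have ha : a <+: v := List.prefix_of_prefix_length_le (List.prefix_append a b) h hl
  obtain ⟨s, rfl⟩ := ha
  refine ⟨s, ?_, rfl⟩
  obtain ⟨t, ht⟩ := h
  have : a ++ (s ++ t) = a ++ b := by simpa [List.append_assoc] using ht
  exact ⟨t, List.append_cancel_left this⟩

lemma prefix_small {v a b : List F2} (h : v <+: a ++ b) (hl : v.length ≤ a.length) :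
    v <+: a :=
  List.prefix_of_prefix_length_le h (List.prefix_append a b) hl

lemma suffix_replicate {t : List F2} {c : F2} {j : ℕ} (h : t <:+ List.replicate j c) :
    t = List.replicate t.length c :=
  List.eq_replicate_of_mem (fun b hb => ((List.mem_replicate).1 (h.subset hb)).2)

lemma prefix_replicate {t : List F2} {c : F2} {j : ℕ} (h : t <+: List.replicate j c) :
    t = List.replicate t.length c :=
  List.eq_replicate_of_mem (fun b hb => ((List.mem_replicate).1 (h.subset hb)).2)

-- cancel a common suffix
lemma suffix_append_cancel {u v y : List F2} (h : u ++ y <:+ v ++ y) : u <:+ v := by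
  obtain ⟨s, hs⟩ := h
  have : (s ++ u) ++ y = v ++ y := by simpa [List.append_assoc] using hs
  exact ⟨s, List.append_cancel_right this⟩

-- singleton suffix of explicit concat
lemma singleton_suffix {x c : F2} {w : List F2} (h : [x] <:+ w ++ [c]) : x = c := by
  have := suffix_eq_suffix h (List.suffix_append w [c]) rfl
  simpa using this

-- a ones-prefix cannot cross a zero
lemma ones_prefix_zero {r : ℕ} {x y : List F2} (h : R r <+: x ++ 0 :: y) : R r <+: x := by
  rcases le_or_gt r x.length with hle | hlt
  · have hx : x <+: x ++ 0 :: y := List.prefix_append x (0 :: y)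
    exact List.prefix_of_prefix_length_le h hx (by simpa using hle)
  · exfalso
    have hx : x ++ [0] <+: x ++ 0 :: y := by
      refine ⟨y, by simp⟩
    have h2 : x ++ [0] <+: R r :=
      List.prefix_of_prefix_length_le hx h (by simp; omega)
    have := h2.subset (by simp : (0:F2) ∈ x ++ [0])
    exact one_ne_zero' (mem_R this).symm

lemma ones_suffix_zero {r : ℕ} {x y : List F2} (h : R r <:+ x ++ 0 :: y) : R r <:+ y := by
  have hrev : R r <+: y.reverse ++ 0 :: x.reverse := by
    have := (List.reverse_prefix (l₁ := R r) (l₂ := x ++ 0 :: y)).2 ?_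
    · simpa [List.reverse_append] using this
    · simpa using h
  have := ones_prefix_zero hrev
  have h2 : (R r).reverse <+: y.reverse := by simpa using this
  simpa using (List.reverse_prefix).1 h2

lemma ones_infix_zero {r : ℕ} {x y : List F2} (h : R r <:+: x ++ 0 :: y) :
    R r <:+: x ∨ R r <:+: y := by
  obtain ⟨t, hpt, hts⟩ := (List.infix_iff_prefix_suffix).1 h
  rcases le_or_gt t.length (y.length) with hle | hlt
  · have hts' : t <:+ (x ++ [0]) ++ y := by simpa using hts
    exact Or.inr ((List.infix_iff_prefix_suffix).2 ⟨t, hpt, suffix_small hts' (by simpa using hle)⟩)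
  · obtain ⟨e, he, rfl⟩ := suffix_split (b := 0 :: y) hts (by simp; omega)
    exact Or.inl ((List.infix_iff_prefix_suffix).2 ⟨e, ones_prefix_zero hpt, he⟩)

lemma ones_infix_zeros {r k : ℕ} {G : List F2} (hr : 1 ≤ r) (h : R r <:+: Z k ++ G) :
    R r <:+: G := by
  induction k with
  | zero => simpa [Z] using h
  | succ k ih =>
    have : R r <:+: ([] : List F2) ++ 0 :: (Z k ++ G) := by
      simpa [Z_succ, List.append_assoc] using h
    rcases ones_infix_zero this with h1 | h1
    · exfalso; have := h1.length_le; simp at this; omega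
    · exact ih h1

lemma ones_infix_mono {a b : ℕ} {w : List F2} (hab : a ≤ b) (h : R b <:+: w) : R a <:+: w :=
  List.IsInfix.trans (by
    have : R b = R a ++ R (b - a) := by rw [← R_add]; congr 1; omega
    exact this ▸ (List.prefix_append _ _).isInfix) h
-- chunk C : structure of g
lemma g_two : g 2 = [1,0,1,1,0,1] := by rfl

lemma g_succ (m : ℕ) (hm : 1 ≤ m) :
    g (m+1) = g m ++ [0] ++ R (m+1) ++ [0] ++ g m := by
  obtain ⟨r, rfl⟩ := Nat.exists_eq_add_of_le' hm
  show g (r+2) = _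
  rw [g]
  rfl

lemma g_reverse (m : ℕ) : (g m).reverse = g m := by
  induction m using Nat.strong_induction_on with
  | _ m ih =>
    match m with
    | 0 => rfl
    | 1 => rfl
    | (r+2) =>
      rw [g]
      simp [List.reverse_append, ih (r+1) (by omega), List.reverse_replicate, List.append_assoc]

lemma g_last (m : ℕ) (hm : 1 ≤ m) : g m = [1] ∨ ∃ w, g m = w ++ [0, 1] := by
  induction m with
  | zero => omega
  | succ r ih =>
    rcases Nat.eq_or_lt_of_le hm with h1 | h1
    · left; rw [← h1]; rfl
    · have hr : 1 ≤ r := by omega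
      rw [g_succ r hr]
      rcases ih hr with h | ⟨w, hw⟩
      · right
        exact ⟨g r ++ [0] ++ R (r+1), by rw [h]; simp [List.append_assoc]⟩
      · right
        refine ⟨g r ++ [0] ++ R (r+1) ++ [0] ++ w, ?_⟩
        rw [hw]; simp [List.append_assoc]

lemma g_head (m : ℕ) (hm : 1 ≤ m) : ∃ w, g m = 1 :: w := by
  rcases g_last m hm with h | ⟨w, hw⟩
  · exact ⟨[], h⟩
  · have h2 : (g m).reverse = g m := g_reverse m
    rw [hw] at h2
    simp [List.reverse_append] at h2
    exact ⟨0 :: w.reverse, by rw [hw, ← h2]⟩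

lemma g_ne_nil (m : ℕ) (hm : 1 ≤ m) : g m ≠ [] := by
  obtain ⟨w, hw⟩ := g_head m hm; simp [hw]

lemma g_ends_one (m : ℕ) (hm : 1 ≤ m) : ∃ w, g m = w ++ [1] := by
  rcases g_last m hm with h | ⟨w, hw⟩
  · exact ⟨[], by simpa using h⟩
  · exact ⟨w ++ [0], by simpa [List.append_assoc] using hw⟩

-- run lemma: g m contains no block of m+1 ones
lemma g_no_ones (m : ℕ) : ¬ (R (m+1) <:+: g m) := by
  induction m using Nat.strong_induction_on with
  | _ m ih =>
    match m with
    | 0 => intro h; have := h.length_le; simp [g, R] at this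
    | 1 => intro h; have := h.length_le; simp [g, R] at this
    | (r+2) =>
      intro h
      rw [g] at h
      have h' : R (r+3) <:+: (g (r+1) ++ [0] ++ R (r+2)) ++ 0 :: g (r+1) := by
        simpa [List.append_assoc, R] using h
      rcases ones_infix_zero h' with h1 | h1
      · have h'' : R (r+3) <:+: g (r+1) ++ 0 :: R (r+2) := by
          simpa [List.append_assoc] using h1
        rcases ones_infix_zero h'' with h2 | h2
        · exact ih (r+1) (by omega) (ones_infix_mono (by omega) h2)
        · have := h2.length_le; simp [R] at this
      · exact ih (r+1) (by omega) (ones_infix_mono (by omega) h1)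

lemma g_no_ones' {m r : ℕ} (hr : m < r) : ¬ (R r <:+: g m) := fun h =>
  g_no_ones m (ones_infix_mono (by omega) h)
-- chunk D : unique occurrence of the pattern 0 1^M 0
def pat (M : ℕ) : List F2 := [0] ++ R M ++ [0]

lemma pat_reverse (M : ℕ) : (pat M).reverse = pat M := by
  simp [pat, List.reverse_append]

lemma ones_infix_pat (M : ℕ) : R M <:+: pat M :=
  ⟨[0], [0], by simp [pat]⟩

lemma U1 {M : ℕ} {f z z' f' : List F2}
    (heq : f ++ pat M ++ z = z' ++ pat M ++ f')
    (hlt : f.length < z'.length)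
    (hz1 : ¬ R M <+: z) (hz2 : ¬ pat M <:+: z) : False := by
  have hf : f <+: z' := by
    refine List.prefix_of_prefix_length_le (l₃ := f ++ pat M ++ z)
      ⟨pat M ++ z, by rw [List.append_assoc]⟩
      ⟨pat M ++ f', by simpa [List.append_assoc] using heq.symm⟩ (le_of_lt hlt)
  obtain ⟨d, rfl⟩ := hf
  have h2 : pat M ++ z = d ++ (pat M ++ f') := by
    apply List.append_cancel_left (as := f)
    simpa [List.append_assoc] using heq
  cases d with
  | nil => simp at hlt
  | cons dh dt =>
    have h2' : (0:F2) :: (R M ++ 0 :: z) = dh :: (dt ++ (pat M ++ f')) := by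
      simpa [pat, List.append_assoc] using h2
    injection h2' with hd h3
    have hRpre : R M <+: R M ++ 0 :: z := List.prefix_append _ _
    have hdtpre : dt <+: R M ++ 0 :: z := ⟨pat M ++ f', h3.symm⟩
    rcases lt_trichotomy dt.length M with hlt2 | heq2 | hgt2
    · have hdt : dt = R dt.length :=
        prefix_replicate (List.prefix_of_prefix_length_le hdtpre hRpre (by simp; omega))
      rw [hdt] at h3
      have hsplit : R M = R dt.length ++ R (M - dt.length) := by
        rw [← R_add]; congr 1; omega
      rw [hsplit] at h3
      have h4 : R (M - dt.length) ++ 0 :: z = pat M ++ f' :=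
        List.append_cancel_left (as := R dt.length) (by simpa [List.append_assoc] using h3)
      have e : M - dt.length = (M - dt.length - 1) + 1 := by omega
      rw [e, R_succ] at h4
      have h5 : (1:F2) :: (R (M - dt.length - 1) ++ 0 :: z) = 0 :: (R M ++ 0 :: f') := by
        simpa [pat, List.append_assoc] using h4
      injection h5 with h6 _
      exact one_ne_zero' h6
    · have hdt : dt = R M := prefix_eq_prefix hdtpre hRpre (by rw [length_R]; exact heq2)
      rw [hdt] at h3
      have h4 : (0:F2) :: z = pat M ++ f' := List.append_cancel_left (as := R M) h3
      have h5 : (0:F2) :: z = 0 :: (R M ++ 0 :: f') := by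
        simpa [pat, List.append_assoc] using h4
      injection h5 with _ h6
      exact hz1 ⟨0 :: f', h6.symm⟩
    · have hR : R M <+: dt := List.prefix_of_prefix_length_le hRpre hdtpre (by simp; omega)
      obtain ⟨dt2, rfl⟩ := hR
      have h4 : (0:F2) :: z = dt2 ++ (pat M ++ f') := by
        apply List.append_cancel_left (as := R M)
        simpa [List.append_assoc] using h3
      cases dt2 with
      | nil =>
        have h5 : (0:F2) :: z = 0 :: (R M ++ 0 :: f') := by
          simpa [pat, List.append_assoc] using h4
        injection h5 with _ h6
        exact hz1 ⟨0 :: f', h6.symm⟩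
      | cons ch ct =>
        injection h4 with _ h6
        exact hz2 ⟨ct, f', by rw [List.append_assoc]; exact h6.symm⟩

lemma Umain {M : ℕ} {f z z' f' : List F2}
    (heq : f ++ pat M ++ z = z' ++ pat M ++ f')
    (hz1 : ¬ R M <+: z) (hz2 : ¬ pat M <:+: z)
    (hf1 : ¬ R M <+: f') (hf2 : ¬ pat M <:+: f') :
    f = z' ∧ z = f' := by
  have hlen : f.length = z'.length := by
    rcases lt_trichotomy f.length z'.length with h | h | h
    · exact absurd (U1 heq h hz1 hz2) (by simp)
    · exact h
    · exact absurd (U1 heq.symm h hf1 hf2) (by simp)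
  constructor
  · exact List.append_inj_left (by simpa [List.append_assoc] using heq) hlen
  · have := List.append_inj_right (by simpa [List.append_assoc] using heq) hlen
    exact List.append_cancel_left this
-- chunk E : IsLPPS generic helpers
lemma lpps_unique {p q q' : List F2} (h : IsLPPS p q) (h' : IsLPPS p q') : q = q' := by
  obtain ⟨h1, h2, h3, h4⟩ := h
  obtain ⟨h1', h2', h3', h4'⟩ := h'
  exact suffix_eq_suffix h2 h2' (le_antisymm (h4' q h1 h2 h3) (h4 q' h1' h2' h3'))

lemma isRSE_iff {p : List F2} {x : F2} :
    IsRSE p (p ++ [x]) ↔ ∃ q, IsLPPS p q ∧ (x :: q) <:+ p := by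
  constructor
  · rintro ⟨x', q, hq, hs, he⟩
    have : x' = x := by
      have := List.append_cancel_left he
      injection this with h _
      exact h.symm
    exact ⟨q, hq, this ▸ hs⟩
  · rintro ⟨q, hq, hs⟩
    exact ⟨x, q, hq, hs, rfl⟩

lemma flexedPoint_iff {w p : List F2} {x : F2} :
    FlexedPoint w (p ++ [x]) ↔ (p ++ [x]) <+: w ∧ ¬ IsRSE p (p ++ [x]) := by
  constructor
  · rintro ⟨hpre, p', x', he, hn⟩
    obtain ⟨rfl, he2⟩ := List.append_inj he (by
      have := congrArg List.length he; simp at this; omega)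
    exact ⟨hpre, hn⟩
  · rintro ⟨hpre, hn⟩
    exact ⟨hpre, p, x, rfl, hn⟩

-- palindrome: head = last
lemma pal_head_last {q : List F2} {a b : F2} {u v : List F2}
    (hq : q.reverse = q) (h1 : q = a :: u) (h2 : q = v ++ [b]) : a = b := by
  have h3 : q.reverse = b :: v.reverse := by rw [h2]; simp
  rw [hq, h1] at h3
  exact (List.cons_eq_cons.mp h3).1

-- (L1) : lpps of 0^k ++ G is G, for G a palindrome ending in 1
lemma lppsA {k : ℕ} {G : List F2} (hk : 1 ≤ k) (hGr : G.reverse = G)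
    (hGe : ∃ w, G = w ++ [1]) : IsLPPS (Z k ++ G) G := by
  refine ⟨hGr, List.suffix_append _ _, ?_, ?_⟩
  · intro h; have := congrArg List.length h; simp at this; omega
  · intro q hq hs hne
    by_contra hlen
    push_neg at hlen
    obtain ⟨e, he, rfl⟩ := suffix_split hs (by omega)
    have hel : 1 ≤ e.length := by
      rcases Nat.eq_zero_or_pos e.length with h0 | h0
      · exfalso; rw [List.length_eq_zero_iff.1 h0] at hlen; simp at hlen
      · exact h0
    have he0 : e = Z e.length := suffix_replicate he
    obtain ⟨w, rfl⟩ := hGe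
    have hcons : e ++ (w ++ [1]) = 0 :: (Z (e.length - 1) ++ (w ++ [1])) := by
      rw [he0]
      have : Z e.length = 0 :: Z (e.length - 1) := by
        rw [← Z_succ]; congr 1; omega
      rw [this]; simp
    have := pal_head_last hq hcons (v := e ++ w) (b := 1) (by simp)
    exact absurd this (by decide)

-- (L2) : lpps of 0^k ++ G ++ [0] is 0 :: G ++ [0], for G a palindrome starting with 1
lemma lppsB {k : ℕ} {G : List F2} (hk : 2 ≤ k) (hGr : G.reverse = G)
    (hGh : ∃ w, G = 1 :: w) : IsLPPS (Z k ++ G ++ [0]) (0 :: (G ++ [0])) := by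
  refine ⟨by simp [hGr], ?_, ?_, ?_⟩
  · refine ⟨Z (k-1), ?_⟩
    have : Z k = Z (k-1) ++ [0] := by
      have : Z k = Z (k-1) ++ Z 1 := by rw [← Z_add]; congr 1; omega
      exact this
    rw [this]; simp
  · intro h; have := congrArg List.length h; simp at this; omega
  · intro q hq hs hne
    by_contra hlen
    push_neg at hlen
    simp at hlen
    have hs' : q <:+ Z k ++ (G ++ [0]) := by simpa [List.append_assoc] using hs
    obtain ⟨e, he, rfl⟩ := suffix_split hs' (by simp; omega)
    have hel : 2 ≤ e.length := by
      have := congrArg List.length (rfl : e ++ (G ++ [0]) = e ++ (G ++ [0]))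
      simp at hlen ⊢
      omega
    have he0 : e = Z e.length := suffix_replicate he
    have hj2 : 2 ≤ e.length := hel
    rw [he0] at hq
    have h1 : (0:F2) :: (G.reverse ++ Z e.length) = Z e.length ++ (G ++ [0]) := by
      rw [← hq]; simp [List.reverse_append]
    rw [hGr] at h1
    have h2 : Z e.length = 0 :: Z (e.length - 1) := by rw [← Z_succ]; congr 1; omega
    rw [h2] at h1
    simp only [List.cons_append] at h1
    injection h1 with _ h3
    -- h3 : G ++ 0 :: Z (e.length -1) = Z (e.length -1) ++ (G ++ [0])
    obtain ⟨w, rfl⟩ := hGh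
    have h4 : Z (e.length - 1) = 0 :: Z (e.length - 2) := by rw [← Z_succ]; congr 1; omega
    rw [h4] at h3
    simp only [List.cons_append] at h3
    injection h3 with h5 _
    exact absurd h5 (by decide)
-- chunk F : the main LPPS lemmas

lemma ones_zero_eq {a b : ℕ} {u v : List F2} (h : R a ++ 0 :: u = R b ++ 0 :: v) : a = b := by
  induction a generalizing b with
  | zero =>
    cases b with
    | zero => rfl
    | succ c =>
      rw [R_succ] at h
      simp only [R, List.replicate, List.nil_append, List.cons_append] at h
      exact absurd (List.cons_eq_cons.mp h).1 (by decide)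
  | succ a ih =>
    cases b with
    | zero =>
      rw [R_succ] at h
      simp only [R, List.replicate, List.nil_append, List.cons_append] at h
      exact absurd (List.cons_eq_cons.mp h).1 (by decide)
    | succ c =>
      rw [R_succ, R_succ] at h
      simp only [List.cons_append] at h
      have := (List.cons_eq_cons.mp h).2
      rw [ih this]

lemma ones_suffix_zeros {M k : ℕ} {A : List F2} (hM : 1 ≤ M) (hrun : ¬ R M <:+: A)
    (h : R M <:+ Z k ++ A) : False := by
  rcases le_or_gt M A.length with hle | hlt
  · exact hrun (suffix_small h (by simpa using hle)).isInfix
  · obtain ⟨e, he, heq⟩ := suffix_split h (by simp; omega)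
    have hel : 1 ≤ e.length := by
      have := congrArg List.length heq; simp at this; omega
    have he0 : e = Z e.length := suffix_replicate he
    have : (0:F2) ∈ R M := by
      rw [heq, he0]
      apply List.mem_append_left
      exact (List.mem_replicate).2 ⟨by omega, rfl⟩
    exact absurd (mem_R this) (by decide)

lemma pat_not_infix_zeros {M k : ℕ} {A : List F2} (hM : 1 ≤ M) (hrun : ¬ R M <:+: A) :
    ¬ pat M <:+: Z k ++ A := fun h =>
  hrun (ones_infix_zeros hM ((ones_infix_pat M).trans h))

-- the c2 condition for lppsD
lemma patc2 {M i : ℕ} {A : List F2} (him : i ≤ M) (hrun : ¬ R M <:+: A) :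
    ¬ pat M <:+: A ++ ([0] ++ R i) := by
  rintro ⟨s, t, hst⟩
  have hsuf : pat M ++ t <:+ (A ++ [0]) ++ R i := by
    refine ⟨s, ?_⟩
    simpa [List.append_assoc] using hst
  rcases le_or_gt (M + 2 + t.length) i with hle | hlt
  · have := suffix_small hsuf (by simp [pat]; omega)
    have h0 : (0:F2) ∈ R i := this.subset (by simp [pat])
    exact absurd (mem_R h0) (by decide)
  · obtain ⟨e2, he2, heq2⟩ := suffix_split hsuf (by simp [pat]; omega)
    rcases le_or_gt i t.length with hti | hti
    · -- R i is a suffix of t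
      have hRt : R i <:+ t := by
        refine List.suffix_of_suffix_length_le ?_ (List.suffix_append (pat M) t) (by simp; omega)
        rw [heq2]; exact List.suffix_append _ _
      obtain ⟨t1, rfl⟩ := hRt
      have hcan : pat M ++ t1 = e2 := by
        apply List.append_cancel_right (bs := R i)
        simpa [List.append_assoc] using heq2
      have hsub : pat M ++ t1 <:+ A ++ [0] := hcan ▸ he2
      cases t1 with
      | nil =>
        have : ([0] ++ R M) ++ [0] <:+ A ++ [0] := by simpa [pat] using hsub
        have h2 : [0] ++ R M <:+ A := suffix_append_cancel this
        have h3 : R M <:+ A := (List.suffix_append [0] (R M)).trans h2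
        exact hrun h3.isInfix
      | cons c t2 =>
        have ht1 : (c :: t2) <:+ A ++ [0] := (List.suffix_append (pat M) _).trans hsub
        obtain ⟨t3, ht3l, ht3⟩ := suffix_split ht1 (by simp)
        rw [ht3] at hsub
        have : (pat M ++ t3) ++ [0] <:+ A ++ [0] := by simpa [List.append_assoc] using hsub
        have h2 : pat M ++ t3 <:+ A := suffix_append_cancel this
        have h3 : pat M <:+: A :=
          (List.infix_iff_prefix_suffix).2 ⟨pat M ++ t3, List.prefix_append _ _, h2⟩
        exact hrun ((ones_infix_pat M).trans h3)
    · -- t shorter than the ones block: 0::t lands inside R i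
      have h0t : (0 :: t) <:+ (pat M) ++ t := by
        refine ⟨[0] ++ R M, by simp [pat]⟩
      have : (0 :: t) <:+ e2 ++ R i := heq2 ▸ h0t
      have h2 := suffix_small this (by simp; omega)
      have h0 : (0:F2) ∈ R i := h2.subset (by simp)
      exact absurd (mem_R h0) (by decide)
-- lppsC : lpps of W1 ++ 1^n is 1^n when W1 ends in 0 and has no 1^n factor
lemma lppsC {n : ℕ} {W1 : List F2} (hn : 1 ≤ n) (hW : ∃ w, W1 = w ++ [0])
    (hrun : ¬ R n <:+: W1) : IsLPPS (W1 ++ R n) (R n) := by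
  obtain ⟨w, rfl⟩ := hW
  refine ⟨by simp, List.suffix_append _ _, ?_, ?_⟩
  · intro h; have := congrArg List.length h; simp at this; omega
  · intro q hq hs hne
    by_contra hlen
    push_neg at hlen
    simp at hlen
    obtain ⟨e, he, rfl⟩ := suffix_split hs (by simp; omega)
    have hel : 1 ≤ e.length := by
      rcases Nat.eq_zero_or_pos e.length with h0 | h0
      · rw [List.length_eq_zero_iff.1 h0] at hlen; simp at hlen
      · exact h0
    have hq2 : e ++ R n = R n ++ e.reverse := by
      conv_lhs => rw [← hq]
      simp [List.reverse_append]
    rcases le_or_gt e.length n with hle | hlt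
    · have hepre : e <+: R n :=
        List.prefix_of_prefix_length_le (l₃ := e ++ R n) (List.prefix_append _ _)
          ⟨e.reverse, hq2.symm⟩ (by simp; omega)
      have he1 : e = R e.length := prefix_replicate hepre
      obtain ⟨e2, he2l, he2⟩ := suffix_split he (by simp; omega)
      have : (0:F2) ∈ e := by rw [he2]; simp
      rw [he1] at this
      exact absurd (mem_R this) (by decide)
    · have hRpre : R n <+: e :=
        List.prefix_of_prefix_length_le (l₃ := e ++ R n) ⟨e.reverse, hq2.symm⟩
          (List.prefix_append _ _) (by simp; omega)
      exact hrun (hRpre.isInfix.trans he.isInfix)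

-- lppsD : lpps of 0^k A 0 1^m 0 A 0 1^i  is  1^i 0 A 0 1^i   (1 ≤ i ≤ m)
lemma lppsD {k m i : ℕ} {A : List F2} (hk : 1 ≤ k) (hi1 : 1 ≤ i) (him : i ≤ m)
    (hA : A.reverse = A) (hAh : ∃ w, A = 1 :: w)
    (hArun : ¬ R m <:+: A) :
    IsLPPS (Z k ++ A ++ [0] ++ R m ++ [0] ++ A ++ [0] ++ R i)
      (R i ++ [0] ++ A ++ [0] ++ R i) := by
  have hAl : 1 ≤ A.length := by obtain ⟨w, rfl⟩ := hAh; simp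
  refine ⟨by simp [List.reverse_append, hA, List.append_assoc], ?_, ?_, ?_⟩
  · refine ⟨Z k ++ A ++ [0] ++ R (m - i), ?_⟩
    have hsp : R m = R (m - i) ++ R i := by rw [← R_add]; congr 1; omega
    rw [hsp]
    simp [List.append_assoc]
  · intro h; have := congrArg List.length h; simp at this; omega
  · intro q hq hs hne
    by_contra hlen
    push_neg at hlen
    simp at hlen
    have hs' : q <:+ (Z k ++ (A ++ ([0] ++ R m))) ++ ([0] ++ (A ++ ([0] ++ R i))) := by
      simpa [List.append_assoc] using hs
    obtain ⟨e, he, rfl⟩ := suffix_split hs' (by simp; omega)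
    have hel : i < e.length := by
      have := congrArg List.length (rfl : e ++ ([0] ++ (A ++ ([0] ++ R i))) = _)
      simp at hlen
      omega
    have hq2 : R i ++ ([0] ++ (A ++ ([0] ++ e.reverse))) = e ++ ([0] ++ (A ++ ([0] ++ R i))) := by
      conv_rhs => rw [← hq]
      simp [List.reverse_append, hA, List.append_assoc]
    rcases le_or_gt e.length m with hle | hlt
    · have heR : e <:+ R m := by
        refine suffix_small (a := Z k ++ (A ++ [0])) (by simpa [List.append_assoc] using he)
          (by simp; omega)
      have he1 : e = R e.length := suffix_replicate heR
      rw [he1] at hq2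
      have := ones_zero_eq (a := i) (b := e.length) (by simpa [List.append_assoc] using hq2)
      omega
    · have he2 : e <:+ (Z k ++ (A ++ [0])) ++ R m := by simpa [List.append_assoc] using he
      obtain ⟨e1, he1, rfl⟩ := suffix_split he2 (by simp; omega)
      have he1l : 1 ≤ e1.length := by
        have := congrArg List.length (rfl : e1 ++ R m = e1 ++ R m); simp at hlt ⊢; omega
      have he3 : e1 <:+ (Z k ++ A) ++ [0] := by simpa [List.append_assoc] using he1
      obtain ⟨f, hf, rfl⟩ := suffix_split he3 (by simp; omega)
      -- q = f ++ pat m ++ (A ++ [0] ++ R i), palindrome gives the U-equation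
      have heqU : f ++ (pat m ++ (A ++ ([0] ++ R i))) =
          (R i ++ ([0] ++ A)) ++ (pat m ++ f.reverse) := by
        simpa [pat, List.append_assoc] using hq2.symm
      have heqU' : f ++ pat m ++ (A ++ ([0] ++ R i)) =
          (R i ++ ([0] ++ A)) ++ pat m ++ f.reverse := by
        simpa [List.append_assoc] using heqU
      have hz1 : ¬ R m <+: A ++ ([0] ++ R i) := by
        intro h
        have h2 : R m <+: A ++ 0 :: R i := by simpa using h
        exact hArun (ones_prefix_zero h2).isInfix
      have hz2 : ¬ pat m <:+: A ++ ([0] ++ R i) := patc2 him hArun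
      have hf1 : ¬ R m <+: f.reverse := by
        intro h
        have h2 : R m <:+ f := by
          rw [← reverse_R m] at h
          exact (List.reverse_prefix).1 h
        exact ones_suffix_zeros (le_trans hi1 him) hArun (h2.trans hf)
      have hf2 : ¬ pat m <:+: f.reverse := by
        intro h
        have h2 : pat m <:+: f := by
          rw [← pat_reverse m] at h
          exact (List.reverse_infix).1 h
        exact pat_not_infix_zeros (le_trans hi1 him) hArun (h2.trans hf.isInfix)
      obtain ⟨hfe, -⟩ := Umain heqU' hz1 hz2 hf1 hf2
      -- f = R i ++ [0] ++ A but f is a suffix of Z k ++ A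
      obtain ⟨e4, he4, he4e⟩ := suffix_split hf (by
        have := congrArg List.length hfe; simp at this; simp; omega)
      rw [hfe] at he4e
      have hcan : R i ++ [0] = e4 := by
        apply List.append_cancel_right (bs := A)
        simpa [List.append_assoc] using he4e
      have he40 : e4 = Z e4.length := suffix_replicate he4
      have : (1:F2) ∈ Z e4.length := by
        rw [← he40, ← hcan]
        exact List.mem_append_left _ ((List.mem_replicate).2 ⟨by omega, rfl⟩)
      exact absurd ((List.mem_replicate).1 this).2 (by decide)

-- lppsE : lpps of 0^k G 0 1^M 0 Gi  is  rev Gi 0 1^M 0 Gi   (Gi a prefix of palindrome G)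
lemma lppsE {k M : ℕ} {G Gi : List F2} (hk : 1 ≤ k) (hM : 1 ≤ M)
    (hGr : G.reverse = G) (hGrun : ¬ R M <:+: G) (hpre : Gi <+: G) :
    IsLPPS (Z k ++ G ++ [0] ++ R M ++ [0] ++ Gi)
      (Gi.reverse ++ [0] ++ R M ++ [0] ++ Gi) := by
  have hGisuf : Gi.reverse <:+ G := by
    rw [← hGr]
    exact (List.reverse_suffix).2 hpre
  refine ⟨by simp [List.reverse_append, List.append_assoc], ?_, ?_, ?_⟩
  · obtain ⟨G0, hG0⟩ := hGisuf
    refine ⟨Z k ++ G0, ?_⟩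
    rw [← hG0]
    simp [List.append_assoc]
  · intro h
    have := congrArg List.length h
    have hGil : Gi.length ≤ G.length := hpre.length_le
    simp at this; omega
  · intro q hq hs hne
    by_contra hlen
    push_neg at hlen
    simp at hlen
    have hs' : q <:+ (Z k ++ G) ++ ([0] ++ (R M ++ ([0] ++ Gi))) := by
      simpa [List.append_assoc] using hs
    obtain ⟨e, he, rfl⟩ := suffix_split hs' (by simp; omega)
    have hel : Gi.length < e.length := by
      simp at hlen
      omega
    have hq2 : Gi.reverse ++ ([0] ++ (R M ++ ([0] ++ e.reverse))) =
        e ++ ([0] ++ (R M ++ ([0] ++ Gi))) := by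
      conv_rhs => rw [← hq]
      simp [List.reverse_append, List.append_assoc]
    have heqU : e ++ pat M ++ Gi = Gi.reverse ++ pat M ++ e.reverse := by
      simpa [pat, List.append_assoc] using hq2.symm
    have hz1 : ¬ R M <+: Gi := fun h => hGrun (h.isInfix.trans hpre.isInfix)
    have hz2 : ¬ pat M <:+: Gi := fun h =>
      hGrun (((ones_infix_pat M).trans h).trans hpre.isInfix)
    have hf1 : ¬ R M <+: e.reverse := by
      intro h
      have h2 : R M <:+ e := by
        rw [← reverse_R M] at h
        exact (List.reverse_prefix).1 h
      exact ones_suffix_zeros hM hGrun (h2.trans he)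
    have hf2 : ¬ pat M <:+: e.reverse := by
      intro h
      have h2 : pat M <:+: e := by
        rw [← pat_reverse M] at h
        exact (List.reverse_infix).1 h
      exact pat_not_infix_zeros hM hGrun (h2.trans he.isInfix)
    obtain ⟨hfe, -⟩ := Umain heqU hz1 hz2 hf1 hf2
    have := congrArg List.length hfe
    simp at this
    omega
-- chunk H : case lemmas

lemma Z_split (k : ℕ) (hk : 1 ≤ k) : Z k = Z (k-1) ++ [0] := by
  conv_lhs => rw [show k = (k-1)+1 by omega, Z_add]
  rfl

lemma concat_eq {p w : List F2} {x c : F2} (h : p ++ [x] = w ++ [c]) : p = w ∧ x = c := by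
  have hl : p.length = w.length := by
    have := congrArg List.length h; simp at this; omega
  obtain ⟨h1, h2⟩ := List.append_inj h hl
  exact ⟨h1, by injection h2⟩

lemma g_run (m : ℕ) (hm : 1 ≤ m) : ¬ R (m+1) <:+: Z k ++ g m ++ [0] := by
  intro h
  have h' : R (m+1) <:+: (Z k ++ g m) ++ 0 :: ([] : List F2) := by
    simpa [List.append_assoc] using h
  rcases ones_infix_zero h' with h1 | h1
  · exact g_no_ones' (by omega) (ones_infix_zeros (by omega) h1)
  · have := h1.length_le; simp [R] at this

-- case s = [0] : extension of 0^k g m by 0 is standard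
lemma rse_c0 {k m : ℕ} (hk : 2 ≤ k) (hm : 1 ≤ m) :
    IsRSE (Z k ++ g m) (Z k ++ g m ++ [0]) := by
  rw [show Z k ++ g m ++ [0] = (Z k ++ g m) ++ [(0:F2)] by simp, isRSE_iff]
  refine ⟨g m, lppsA (by omega) (g_reverse m) (g_ends_one m hm), ?_⟩
  refine ⟨Z (k-1), ?_⟩
  rw [show (0:F2) :: g m = [0] ++ g m by simp, ← List.append_assoc, ← Z_split k (by omega)]

-- case s = 0 1^j, 2 ≤ j ≤ m (so m ≥ 2) : extension by 1 is standard
lemma rse_c1 {k m i : ℕ} (hk : 2 ≤ k) (hm : 2 ≤ m) (hi1 : 1 ≤ i) (him : i ≤ m - 1) :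
    IsRSE (Z k ++ g m ++ [0] ++ R i) (Z k ++ g m ++ [0] ++ R i ++ [1]) := by
  rw [isRSE_iff]
  have hgm : g m = g (m-1) ++ [0] ++ R m ++ [0] ++ g (m-1) := by
    have := g_succ (m-1) (by omega)
    rw [show m - 1 + 1 = m by omega] at this
    exact this
  have hQ : IsLPPS (Z k ++ g m ++ [0] ++ R i) (R i ++ [0] ++ g (m-1) ++ [0] ++ R i) := by
    rw [hgm]
    have := lppsD (k := k) (m := m) (i := i) (A := g (m-1)) (by omega) hi1 (by omega)
      (g_reverse _) (g_head _ (by omega)) (g_no_ones' (by omega))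
    simpa [List.append_assoc] using this
  refine ⟨_, hQ, ?_⟩
  refine ⟨Z k ++ g (m-1) ++ [0] ++ R (m - i - 1), ?_⟩
  rw [hgm]
  have hsp : R m = R (m - i - 1) ++ R (i + 1) := by rw [← R_add]; congr 1; omega
  rw [hsp, show R (i+1) = 1 :: R i from rfl]
  simp [List.append_assoc]

-- case s = 0 1^(m+1) 0 : extension by 0 is standard
lemma rse_c2 {k m : ℕ} (hk : 2 ≤ k) (hm : 1 ≤ m) :
    IsRSE (Z k ++ g m ++ [0] ++ R (m+1)) (Z k ++ g m ++ [0] ++ R (m+1) ++ [0]) := by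
  rw [isRSE_iff]
  have hQ : IsLPPS (Z k ++ g m ++ [0] ++ R (m+1)) (R (m+1)) := by
    have := lppsC (n := m+1) (W1 := Z k ++ g m ++ [0]) (by omega)
      ⟨Z k ++ g m, by simp⟩ (g_run m hm)
    simpa [List.append_assoc] using this
  refine ⟨_, hQ, ?_⟩
  refine ⟨Z k ++ g m, ?_⟩
  simp [List.append_assoc]

-- case s = 0 1^(m+1) 0 Gi x : extension by x is standard
lemma rse_c3 {k m : ℕ} {Gi : List F2} {x : F2} (hk : 2 ≤ k) (hm : 1 ≤ m)
    (hpre : Gi ++ [x] <+: g m) :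
    IsRSE (Z k ++ g m ++ [0] ++ R (m+1) ++ [0] ++ Gi)
      (Z k ++ g m ++ [0] ++ R (m+1) ++ [0] ++ Gi ++ [x]) := by
  rw [isRSE_iff]
  have hQ : IsLPPS (Z k ++ g m ++ [0] ++ R (m+1) ++ [0] ++ Gi)
      (Gi.reverse ++ [0] ++ R (m+1) ++ [0] ++ Gi) :=
    lppsE (by omega) (by omega) (g_reverse m) (g_no_ones' (by omega))
      ((List.prefix_append Gi [x]).trans hpre)
  refine ⟨_, hQ, ?_⟩
  have hsuf : (Gi ++ [x]).reverse <:+ g m := by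
    rw [← g_reverse m]
    exact (List.reverse_suffix).2 hpre
  obtain ⟨G1, hG1⟩ := hsuf
  refine ⟨Z k ++ G1, ?_⟩
  rw [← hG1]
  simp [List.append_assoc]

-- target 1 is intrinsically flexed
lemma flexed_T1 {k m : ℕ} (hk : 2 ≤ k) (hm : 1 ≤ m) :
    ¬ IsRSE (Z k ++ g m ++ [0]) (Z k ++ g m ++ [0] ++ [1]) := by
  rw [show Z k ++ g m ++ [0] ++ [1] = (Z k ++ g m ++ [0]) ++ [(1:F2)] by simp, isRSE_iff]
  rintro ⟨q, hq, hs⟩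
  have hQ : IsLPPS (Z k ++ g m ++ [0]) (0 :: (g m ++ [0])) :=
    lppsB hk (g_reverse m) (g_head m hm)
  rw [lpps_unique hq hQ] at hs
  have hp : Z k ++ g m ++ [0] = Z (k-1) ++ (0 :: (g m ++ [0])) := by
    rw [Z_split k (by omega)]
    simp [List.append_assoc]
  rw [hp] at hs
  have hs' : [1] ++ (0 :: (g m ++ [0])) <:+ Z (k-1) ++ (0 :: (g m ++ [0])) := by
    simpa using hs
  have := (suffix_append_cancel hs').subset (by simp : (1:F2) ∈ [1])
  exact absurd ((List.mem_replicate).1 this).2 (by decide)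

-- target 2 is intrinsically flexed
lemma flexed_T2 {k m : ℕ} (hk : 2 ≤ k) (hm : 1 ≤ m) :
    ¬ IsRSE (Z k ++ g m ++ [0] ++ R m) (Z k ++ g m ++ [0] ++ R m ++ [1]) := by
  rw [show Z k ++ g m ++ [0] ++ R m ++ [1] = (Z k ++ g m ++ [0] ++ R m) ++ [(1:F2)] by simp,
    isRSE_iff]
  rintro ⟨q, hq, hs⟩
  rcases eq_or_lt_of_le hm with h1 | h1
  · -- m = 1 : p = 0^k ++ [1,0,1]
    have hm1 : m = 1 := h1.symm
    subst hm1
    have hform : Z k ++ g 1 ++ [0] ++ R 1 = Z k ++ [1,0,1] := by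
      show Z k ++ [1] ++ [0] ++ [1] = _
      simp
    rw [hform] at hq hs
    have hQ : IsLPPS (Z k ++ [1,0,1]) [1,0,1] :=
      lppsA (k := k) (by omega) (by decide) ⟨[1,0], by decide⟩
    rw [lpps_unique hq hQ] at hs
    have hs' : [1] ++ [1,0,1] <:+ Z k ++ [1,0,1] := by simpa using hs
    have := (suffix_append_cancel hs').subset (by simp : (1:F2) ∈ [1])
    exact absurd ((List.mem_replicate).1 this).2 (by decide)
  · -- m ≥ 2
    have hm2 : 2 ≤ m := h1
    have hgm : g m = g (m-1) ++ [0] ++ R m ++ [0] ++ g (m-1) := by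
      have := g_succ (m-1) (by omega)
      rw [show m - 1 + 1 = m by omega] at this
      exact this
    rw [hgm] at hq hs
    have hQ : IsLPPS (Z k ++ (g (m-1) ++ [0] ++ R m ++ [0] ++ g (m-1)) ++ [0] ++ R m)
        (R m ++ [0] ++ g (m-1) ++ [0] ++ R m) := by
      have := lppsD (k := k) (m := m) (i := m) (A := g (m-1)) (by omega) (by omega) le_rfl
        (g_reverse _) (g_head _ (by omega)) (g_no_ones' (by omega))
      simpa [List.append_assoc] using this
    rw [lpps_unique hq hQ] at hs
    have hp : Z k ++ (g (m-1) ++ [0] ++ R m ++ [0] ++ g (m-1)) ++ [0] ++ R m =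
        ((Z k ++ g (m-1)) ++ [0]) ++ (R m ++ [0] ++ g (m-1) ++ [0] ++ R m) := by
      simp [List.append_assoc]
    rw [hp] at hs
    have hs' : [1] ++ (R m ++ [0] ++ g (m-1) ++ [0] ++ R m) <:+
        ((Z k ++ g (m-1)) ++ [0]) ++ (R m ++ [0] ++ g (m-1) ++ [0] ++ R m) := by
      simpa [List.append_assoc] using hs
    have := singleton_suffix (suffix_append_cancel hs')
    exact absurd this (by decide)
end St17

open St17 in
theorem stmt17 (n k : ℕ) (hn : 2 ≤ n) (hk : 2 ≤ k) :
    ∀ v : List (Fin 2),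
      (FlexedPoint (List.replicate k (0 : Fin 2) ++ g n) v ∧
        ¬ FlexedPoint (List.replicate k (0 : Fin 2) ++ g (n - 1)) v) ↔
      (v = List.replicate k (0 : Fin 2) ++ g (n - 1) ++ [0, 1] ∨
       v = List.replicate k (0 : Fin 2) ++ g (n - 1) ++ [0] ++
         List.replicate n (1 : Fin 2)) := by
  obtain ⟨m, rfl⟩ : ∃ m, n = m + 1 := ⟨n-1, by omega⟩
  have hm : 1 ≤ m := by omega
  intro v
  simp only [show m + 1 - 1 = m from rfl,
    show List.replicate k (0 : Fin 2) = Z k from rfl,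
    show List.replicate (m+1) (1 : Fin 2) = R (m+1) from rfl]
  have hgs : g (m+1) = g m ++ [0] ++ R (m+1) ++ [0] ++ g m := g_succ m hm
  constructor
  · rintro ⟨hF, hNF⟩
    obtain ⟨hpre, p, x, hvpx, hnR⟩ := hF
    by_cases hle : v.length ≤ k + (g m).length
    · exfalso
      apply hNF
      refine ⟨?_, p, x, hvpx, hnR⟩
      have hpre' : v <+: (Z k ++ g m) ++ ([0] ++ (R (m+1) ++ ([0] ++ g m))) := by
        have := hpre; rw [hgs] at this
        simpa [List.append_assoc] using this
      exact prefix_small hpre' (by simp; omega)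
    · push_neg at hle
      have hpre' : v <+: (Z k ++ g m) ++ ([0] ++ (R (m+1) ++ ([0] ++ g m))) := by
        have := hpre; rw [hgs] at this
        simpa [List.append_assoc] using this
      obtain ⟨s, hsp, rfl⟩ := prefix_split hpre' (by simp; omega)
      have hsl : 1 ≤ s.length := by
        have h := hle; simp at h; omega
      obtain ⟨s2, hs2p, rfl⟩ := prefix_split hsp (by simp; omega)
      rcases le_or_gt s2.length (m+1) with hs2len | hs2len
      · -- inside the ones block
        have hs2R : s2 = R s2.length :=
          prefix_replicate (prefix_small hs2p (by simpa using hs2len))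
        by_cases hj0 : s2.length = 0
        · exfalso
          rw [List.length_eq_zero_iff.1 hj0] at hvpx hnR
          obtain ⟨rfl, rfl⟩ := concat_eq
            (show p ++ [x] = (Z k ++ g m) ++ [(0:F2)] by rw [← hvpx]; simp)
          exact hnR (by simpa [List.append_assoc] using rse_c0 (k := k) (m := m) hk hm)
        · by_cases hj1 : s2.length = 1
          · left
            rw [hs2R, hj1]
            simp [show R 1 = [(1:F2)] from rfl, List.append_assoc]
          · by_cases hjm : s2.length = m + 1
            · right
              rw [hs2R, hjm]
              simp [List.append_assoc]
            · exfalso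
              have hm2 : 2 ≤ m := by omega
              have hRsplit : R s2.length = R (s2.length - 1) ++ [1] := by
                rw [show s2.length = (s2.length - 1) + 1 by omega, R_add]
                rfl
              rw [hs2R] at hvpx hnR
              obtain ⟨rfl, rfl⟩ := concat_eq (show p ++ [x] =
                  (Z k ++ g m ++ [0] ++ R (s2.length - 1)) ++ [(1:F2)] by
                rw [← hvpx, hRsplit]; simp [List.append_assoc])
              refine hnR ?_
              have := rse_c1 (k := k) (m := m) (i := s2.length - 1) hk hm2 (by omega) (by omega)
              simpa [List.append_assoc, ← hRsplit] using this
      · -- past the ones block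
        obtain ⟨s3, hs3p, rfl⟩ := prefix_split hs2p (by simp; omega)
        have hs3l : 1 ≤ s3.length := by
          have h := hs2len; simp at h; omega
        obtain ⟨G', hG'p, rfl⟩ := prefix_split hs3p (by simp; omega)
        rcases List.eq_nil_or_concat G' with rfl | ⟨Gi, c, rfl⟩
        · exfalso
          obtain ⟨rfl, rfl⟩ := concat_eq (show p ++ [x] =
              (Z k ++ g m ++ [0] ++ R (m+1)) ++ [(0:F2)] by
            rw [← hvpx]; simp [List.append_assoc])
          exact hnR (by simpa [List.append_assoc] using rse_c2 (k := k) (m := m) hk hm)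
        · exfalso
          obtain ⟨rfl, rfl⟩ := concat_eq (show p ++ [x] =
              (Z k ++ g m ++ [0] ++ R (m+1) ++ [0] ++ Gi) ++ [c] by
            rw [← hvpx]; simp [List.append_assoc])
          exact hnR (by simpa [List.append_assoc] using rse_c3 hk hm (by simpa using hG'p : Gi ++ [x] <+: g m))
  · rintro (rfl | rfl)
    · refine ⟨⟨?_, Z k ++ g m ++ [0], 1, by simp, ?_⟩, ?_⟩
      · refine ⟨R m ++ ([0] ++ g m), ?_⟩
        rw [hgs]
        simp [show R (m+1) = 1 :: R m from rfl, List.append_assoc]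
      · exact fun h => flexed_T1 hk hm (by simpa [List.append_assoc] using h)
      · rintro ⟨hp, -⟩
        have := hp.length_le
        simp at this
    · refine ⟨⟨?_, Z k ++ g m ++ [0] ++ R m, 1, ?_, ?_⟩, ?_⟩
      · refine ⟨[0] ++ g m, ?_⟩
        rw [hgs]
        simp [List.append_assoc]
      · rw [show R (m+1) = R m ++ [1] by rw [R_add]; rfl]
        simp [List.append_assoc]
      · exact fun h => flexed_T2 hk hm (by
          simpa [show R (m+1) = R m ++ [1] by rw [R_add]; rfl, List.append_assoc] using h)
      · rintro ⟨hp, -⟩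
        have := hp.length_le
        simp at this
end
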